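/- arXiv:1801.09654 — 11 statements merged into one kernel-verified Lean document; each statement's English description precedes it below -/
import Mathlib

section
/- If (α,β)-revival occurs between vertices a and b of a graph at time τ (with β ≠ 0), then a and b are parallel vertices: for every eigenvalue θ_r of the adjacency matrix with spectral projector E_r, the vectors E_r e_a and E_r e_b are parallel (linearly dependent). -/
open Matrix Complex BigOperators


lemma mul_exp_of_eq {n : ℕ} (M B : Matrix (Fin n) (Fin n) ℂ) (θ : ℂ)
    (h : M * B = θ • M) : M * NormedSpace.exp B = Complex.exp θ • M := by
  letI : NormedRing (Matrix (Fin n) (Fin n) ℂ) := Matrix.linftyOpNormedRing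
  letI : NormedAlgebra ℂ (Matrix (Fin n) (Fin n) ℂ) := Matrix.linftyOpNormedAlgebra
  have hpow : ∀ k : ℕ, M * B ^ k = θ ^ k • M := by
    intro k
    induction k with
    | zero => simp
    | succ k ih =>
        rw [pow_succ, ← mul_assoc, ih, smul_mul_assoc, h, smul_smul, pow_succ]
  rw [NormedSpace.exp_eq_tsum (𝕂 := ℂ)]
  have hs : Summable fun k : ℕ => ((k.factorial : ℂ))⁻¹ • B ^ k :=
    NormedSpace.expSeries_summable' (𝕂 := ℂ) B
  have := ((ContinuousLinearMap.mul ℂ (Matrix (Fin n) (Fin n) ℂ)) M).map_tsum hs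
  simp only [ContinuousLinearMap.mul_apply'] at this
  show M * ∑' (k : ℕ), ((k.factorial : ℂ))⁻¹ • B ^ k = _
  refine this.trans ?_
  simp only [ContinuousLinearMap.mul_apply', mul_smul_comm, hpow, smul_smul]
  have hsθ : Summable fun k : ℕ => ((k.factorial : ℂ))⁻¹ * θ ^ k := by
    simpa [smul_eq_mul] using NormedSpace.expSeries_summable' (𝕂 := ℂ) θ
  rw [Summable.tsum_smul_const hsθ]
  congr 1
  rw [Complex.exp_eq_exp_ℂ, NormedSpace.exp_eq_tsum (𝕂 := ℂ)]
  simp [smul_eq_mul]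


/-- Continuous-time quantum walk `U(t) = exp(-itA)` of a real (weighted) adjacency matrix. -/
noncomputable def qwalk {V : Type*} [Fintype V] [DecidableEq V]
    (A : Matrix V V ℝ) (t : ℝ) : Matrix V V ℂ :=
  NormedSpace.exp ((-(Complex.I * (t : ℂ))) • A.map (fun x => (x : ℂ)))

/-- Characteristic (standard basis) vector of a vertex, over `ℂ`. -/
noncomputable def eC {V : Type*} [DecidableEq V] (a : V) : V → ℂ := Pi.single a 1

/-- Characteristic (standard basis) vector of a vertex, over `ℝ`. -/
noncomputable def eR {V : Type*} [DecidableEq V] (a : V) : V → ℝ := Pi.single a 1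

/-- If (α,β)-revival occurs from a to b, then a and b are parallel vertices:
for each spectral projector E r, the vectors E r e_a and E r e_b are linearly dependent. -/
theorem stmt1 {n m : ℕ} (A : Matrix (Fin n) (Fin n) ℝ) (hA : A.IsSymm)
    (θ : Fin m → ℝ) (E : Fin m → Matrix (Fin n) (Fin n) ℝ)
    (hdecomp : A = ∑ r, θ r • E r)
    (hsum : ∑ r, E r = 1)
    (hsymm : ∀ r, (E r).IsSymm)
    (horth : ∀ r s, E r * E s = if r = s then E r else 0)
    (a b : Fin n) (hab : a ≠ b) (τ : ℝ) (α β : ℂ) (hβ : β ≠ 0)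
    (hnorm : ‖α‖ ^ 2 + ‖β‖ ^ 2 = 1)
    (hrev : (qwalk A τ) *ᵥ eC a = α • eC a + β • eC b) :
    ∀ r, ∃ c d : ℝ, ¬ (c = 0 ∧ d = 0) ∧
      c • (E r *ᵥ eR a) + d • (E r *ᵥ eR b) = 0 := by
  intro s
  classical
  -- complexified projectors
  set F : Fin m → Matrix (Fin n) (Fin n) ℂ := fun r => (E r).map (fun x => (x : ℂ)) with hF
  have hFE : ∀ r, F r = (E r).map Complex.ofRealHom := fun r => rfl
  -- F s * (complexified A) = θ s • F s
  have hmapA : A.map (fun x => (x : ℂ)) = ∑ r, (θ r : ℂ) • F r := by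
    ext i j
    rw [hdecomp]
    simp only [hF, Matrix.map_apply, Matrix.sum_apply, Matrix.smul_apply, smul_eq_mul]
    push_cast
    rfl
  have horthC : ∀ r t, F r * F t = if r = t then F r else 0 := by
    intro r t
    have := horth r t
    ext i j
    have h2 : ((E r * E t) i j : ℂ) = ((if r = t then E r else 0) i j : ℂ) := by rw [this]
    simp only [Matrix.mul_apply] at h2 ⊢
    push_cast at h2
    split at h2 <;> split <;> simp_all [hF, Matrix.map_apply, Matrix.mul_apply]
  have hkey : F s * ((-(Complex.I * (τ : ℂ))) • A.map (fun x => (x : ℂ)))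
      = ((-(Complex.I * (τ : ℂ))) * (θ s : ℂ)) • F s := by
    rw [Matrix.mul_smul, hmapA, Finset.mul_sum]
    have : ∀ r ∈ Finset.univ, F s * ((θ r : ℂ) • F r)
        = if r = s then (θ s : ℂ) • F s else 0 := by
      intro r _
      rw [Matrix.mul_smul, horthC s r]
      by_cases h : r = s
      · subst h; simp
      · rw [if_neg (fun hh => h hh.symm), if_neg h, smul_zero]
    rw [Finset.sum_congr rfl this, Finset.sum_ite_eq' Finset.univ s
      (fun _ => (θ s : ℂ) • F s)]
    rw [if_pos (Finset.mem_univ s), smul_smul]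
  have hexp : F s * qwalk A τ
      = Complex.exp ((-(Complex.I * (τ : ℂ))) * (θ s : ℂ)) • F s :=
    mul_exp_of_eq _ _ _ hkey
  -- apply to e_a
  set γ : ℂ := Complex.exp ((-(Complex.I * (τ : ℂ))) * (θ s : ℂ)) with hγ
  have happ : γ • (F s *ᵥ eC a) = α • (F s *ᵥ eC a) + β • (F s *ᵥ eC b) := by
    have h1 : F s *ᵥ ((qwalk A τ) *ᵥ eC a) = γ • (F s *ᵥ eC a) := by
      rw [Matrix.mulVec_mulVec, hexp, Matrix.smul_mulVec]
    rw [hrev] at h1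
    rw [Matrix.mulVec_add, Matrix.mulVec_smul, Matrix.mulVec_smul] at h1
    exact h1.symm
  -- relate to real vectors
  have hcoe : ∀ (x : Fin n) (j : Fin n),
      (F s *ᵥ eC x) j = (((E s *ᵥ eR x) j : ℝ) : ℂ) := by
    intro x j
    have hc : eC x = fun k => Complex.ofRealHom (eR x k) := by
      funext k
      by_cases h : k = x
      · subst h; simp [eC, eR]
      · simp [eC, eR, h]
    rw [hFE, hc]
    exact (RingHom.map_mulVec Complex.ofRealHom (E s) (eR x) j).symm
  set u : Fin n → ℝ := E s *ᵥ eR a with hu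
  set v : Fin n → ℝ := E s *ᵥ eR b with hv
  have hent : ∀ j, (γ - α) * (u j : ℂ) = β * (v j : ℂ) := by
    intro j
    have := congr_fun happ j
    simp only [Pi.add_apply, Pi.smul_apply, smul_eq_mul, hcoe] at this
    rw [← hu, ← hv] at this
    ring_nf
    ring_nf at this
    linear_combination this
  by_cases hua : u = 0
  · exact ⟨1, 0, by simp, by simp [hua]⟩
  · obtain ⟨j0, hj0⟩ : ∃ j, u j ≠ 0 := by
      by_contra h
      push_neg at h
      exact hua (funext h)
    set t : ℝ := v j0 / u j0 with ht
    have hu0 : (u j0 : ℂ) ≠ 0 := by exact_mod_cast hj0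
    have hγα : γ - α = β * (t : ℂ) := by
      have h1 := hent j0
      have h2 : (t : ℂ) = (v j0 : ℂ) / (u j0 : ℂ) := by rw [ht]; push_cast; ring
      rw [h2]
      field_simp
      linear_combination h1
    have hvt : ∀ j, v j = t * u j := by
      intro j
      have h1 := hent j
      rw [hγα] at h1
      have h2 : (t : ℂ) * (u j : ℂ) = (v j : ℂ) :=
        mul_left_cancel₀ hβ (by linear_combination h1)
      exact_mod_cast h2.symm
    refine ⟨t, -1, by simp, ?_⟩
    funext j
    simp [hvt j]
end

section
/- Suppose (α,β)-revival occurs from a to b at time τ and a,b are strongly cospectral (E_r e_a = ± E_r e_b for all r). Then there exist real γ, ζ with α = e^{iζ} cos γ and β = i e^{iζ} sin γ. -/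
open Matrix Complex BigOperators

lemma trig_step (α β : ℂ) (hnorm : ‖α‖ ^ 2 + ‖β‖ ^ 2 = 1)
    (hre : (starRingEnd ℂ) α * β + (starRingEnd ℂ) β * α = 0) :
    ∃ γ ζ : ℝ, α = Complex.exp (Complex.I * ζ) * Real.cos γ ∧
      β = Complex.I * Complex.exp (Complex.I * ζ) * Real.sin γ := by
  have hzre : ((starRingEnd ℂ) α * β).re = 0 := by
    have h2 : (starRingEnd ℂ) β * α = (starRingEnd ℂ) ((starRingEnd ℂ) α * β) := by
      rw [RingHom.map_mul, Complex.conj_conj, mul_comm]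
    rw [h2, Complex.add_conj] at hre
    have := congrArg Complex.re hre
    simpa using this
  by_cases hα : α = 0
  · refine ⟨Real.pi / 2, β.arg - Real.pi / 2, ?_, ?_⟩
    · simp [hα, Real.cos_pi_div_two]
    · have hb1 : ‖β‖ = 1 := by
        have h : ‖β‖ ^ 2 = 1 := by simpa [hα] using hnorm
        nlinarith [norm_nonneg β]
      have hβeq : Complex.exp (Complex.I * β.arg) = β := by
        have := Complex.norm_mul_exp_arg_mul_I β
        rw [hb1] at this
        rw [mul_comm]
        simpa using this
      have hpi : Complex.exp (Complex.I * ((Real.pi / 2 : ℝ) : ℂ)) = Complex.I := by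
        rw [mul_comm, Complex.exp_mul_I]
        simp [← Complex.ofReal_cos, ← Complex.ofReal_sin, Real.cos_pi_div_two,
          Real.sin_pi_div_two]
      rw [Real.sin_pi_div_two]
      have hc : ((β.arg - Real.pi / 2 : ℝ) : ℂ) = (β.arg : ℂ) - ((Real.pi / 2 : ℝ) : ℂ) := by
        push_cast; ring
      rw [hc, mul_sub, Complex.exp_sub, hpi, hβeq, Complex.ofReal_one, mul_one, mul_comm]
      exact (div_mul_cancel₀ β Complex.I_ne_zero).symm
  · set s : ℝ := ((starRingEnd ℂ) α * β).im with hs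
    have hz : (starRingEnd ℂ) α * β = Complex.I * (s : ℂ) := by
      apply Complex.ext <;> simp [hzre, ← hs]
    have hApos : 0 < ‖α‖ := norm_pos_iff.mpr hα
    set A := ‖α‖ with hA
    have hAne : (A : ℂ) ≠ 0 := by exact_mod_cast hApos.ne'
    have habs : |s| = A * ‖β‖ := by
      have h1 := congrArg (fun z : ℂ => ‖z‖) hz
      rw [norm_mul, norm_mul, Complex.norm_conj, Complex.norm_I, one_mul,
        Complex.norm_real, Real.norm_eq_abs] at h1
      exact h1.symm
    have hs2 : s ^ 2 = A ^ 2 * ‖β‖ ^ 2 := by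
      rw [← _root_.sq_abs s, habs]; ring
    set w : ℂ := (A : ℂ) + (s / A : ℝ) * Complex.I with hw
    have hwre : w.re = A := by simp [hw]
    have hwim : w.im = s / A := by simp [hw]
    have habsw : ‖w‖ = 1 := by
      have h1 : ‖w‖ ^ 2 = A ^ 2 + (s / A) ^ 2 := by
        rw [Complex.sq_norm, Complex.normSq_apply, hwre, hwim]; ring
      have h2 : (s / A) ^ 2 = ‖β‖ ^ 2 := by
        rw [div_pow, hs2]; field_simp
      rw [h2, hnorm] at h1
      nlinarith [norm_nonneg w]
    have hwne : w ≠ 0 := by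
      intro h; rw [h] at habsw; simp at habsw
    have hcos : Real.cos w.arg = A := by
      rw [Complex.cos_arg hwne, habsw, hwre]; simp
    have hsin : Real.sin w.arg = s / A := by
      rw [Complex.sin_arg, habsw, hwim]; simp
    have hαeq : α = Complex.exp (Complex.I * (α.arg : ℂ)) * (A : ℂ) := by
      have := Complex.norm_mul_exp_arg_mul_I α
      rw [← hA] at this
      rw [mul_comm (Complex.exp _), mul_comm Complex.I]
      exact this.symm
    have hkey : ((A : ℂ)) ^ 2 * β = α * (Complex.I * (s : ℂ)) := by
      have h := congrArg (fun z => α * z) hz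
      rw [← mul_assoc, Complex.mul_conj] at h
      rw [← h]
      congr 1
      rw [← Complex.sq_norm, ← hA]
      norm_cast
    obtain ⟨ζ, hζ⟩ : ∃ ζ : ℝ, α = Complex.exp (Complex.I * (ζ : ℂ)) * (A : ℂ) :=
      ⟨α.arg, hαeq⟩
    refine ⟨w.arg, ζ, ?_, ?_⟩
    · rw [hcos]; exact hζ
    · rw [hsin]
      have hβeq : β = α * (Complex.I * (s : ℂ)) / ((A : ℂ)) ^ 2 := by
        rw [eq_div_iff (pow_ne_zero 2 hAne)]
        linear_combination hkey
      rw [hβeq, hζ]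
      push_cast
      field_simp

/-- If (α,β)-revival occurs from a to b and a,b are strongly cospectral, then
α = e^{iζ} cos γ and β = i e^{iζ} sin γ for some real γ, ζ. -/
theorem stmt2 {n m : ℕ} (A : Matrix (Fin n) (Fin n) ℝ) (hA : A.IsSymm)
    (θ : Fin m → ℝ) (E : Fin m → Matrix (Fin n) (Fin n) ℝ)
    (hdecomp : A = ∑ r, θ r • E r)
    (hsum : ∑ r, E r = 1)
    (hsymm : ∀ r, (E r).IsSymm)
    (horth : ∀ r s, E r * E s = if r = s then E r else 0)
    (a b : Fin n) (hab : a ≠ b)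
    (hsc : ∀ r, E r *ᵥ eR a = E r *ᵥ eR b ∨ E r *ᵥ eR a = -(E r *ᵥ eR b))
    (τ : ℝ) (α β : ℂ) (hβ : β ≠ 0)
    (hnorm : ‖α‖ ^ 2 + ‖β‖ ^ 2 = 1)
    (hrev : (qwalk A τ) *ᵥ eC a = α • eC a + β • eC b) :
    ∃ γ ζ : ℝ, α = Complex.exp (Complex.I * ζ) * Real.cos γ ∧
      β = Complex.I * Complex.exp (Complex.I * ζ) * Real.sin γ := by
  classical
  letI : SeminormedRing (Matrix (Fin n) (Fin n) ℂ) := Matrix.linftyOpSemiNormedRing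
  letI : NormedRing (Matrix (Fin n) (Fin n) ℂ) := Matrix.linftyOpNormedRing
  letI : NormedAlgebra ℂ (Matrix (Fin n) (Fin n) ℂ) := Matrix.linftyOpNormedAlgebra
  set U : Matrix (Fin n) (Fin n) ℂ := qwalk A τ with hUdef
  set c : Fin m → ℂ := fun r => -(Complex.I * (τ : ℂ)) * (θ r : ℂ) with hc
  set P : Fin m → Matrix (Fin n) (Fin n) ℂ := fun r => (E r).map (fun x => (x : ℂ)) with hP
  -- symmetry of entries of E r
  have hEs : ∀ r (i j : Fin n), E r i j = E r j i := fun r i j => (hsymm r).apply j i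
  -- basic cast facts
  have hPsum : ∑ r, P r = 1 := by
    ext i j
    have h1 : ∑ r, E r i j = (1 : Matrix (Fin n) (Fin n) ℝ) i j := by
      rw [← Matrix.sum_apply i j Finset.univ (fun r => E r), hsum]
    simp only [Matrix.sum_apply, hP, Matrix.map_apply]
    rw [← Complex.ofReal_sum, h1]
    simp [Matrix.one_apply, apply_ite]
  have hmapmul : ∀ M N : Matrix (Fin n) (Fin n) ℝ,
      M.map (fun x : ℝ => (x : ℂ)) * N.map (fun x : ℝ => (x : ℂ))
        = (M * N).map (fun x : ℝ => (x : ℂ)) := by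
    intro M N; ext i j
    simp only [Matrix.mul_apply, Matrix.map_apply]
    norm_cast
  have hPmul : ∀ r s', P r * P s' = if r = s' then P r else 0 := by
    intro r s'
    rw [show P r * P s' = (E r * E s').map (fun x : ℝ => (x : ℂ)) from hmapmul _ _, horth]
    split_ifs with h
    · rfl
    · ext i j; simp
  -- the algebra homomorphism
  let L : (Fin m → ℂ) →ₗ[ℂ] Matrix (Fin n) (Fin n) ℂ :=
    { toFun := fun x => ∑ r, x r • P r
      map_add' := fun x y => by simp [add_smul, Finset.sum_add_distrib]
      map_smul' := fun t x => by simp [Finset.smul_sum, smul_smul] }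
  let φ : (Fin m → ℂ) →ₐ[ℂ] Matrix (Fin n) (Fin n) ℂ :=
    AlgHom.ofLinearMap L
      (by
        show ∑ r, (1 : Fin m → ℂ) r • P r = 1
        simpa using hPsum)
      (by
        intro x y
        show ∑ r, (x * y) r • P r = (∑ r, x r • P r) * ∑ r, y r • P r
        rw [Finset.sum_mul_sum]
        simp_rw [smul_mul_smul_comm, hPmul, smul_ite, smul_zero, Finset.sum_ite_eq,
          Finset.mem_univ, if_true, Pi.mul_apply])
  have hφc : Continuous φ := by
    show Continuous fun x : Fin m → ℂ => ∑ r, x r • P r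
    exact continuous_finset_sum _ fun r _ => (continuous_apply r).smul continuous_const
  have hAc : A.map (fun x : ℝ => (x : ℂ)) = ∑ r, (θ r : ℂ) • P r := by
    ext i j
    rw [hdecomp]
    simp only [Matrix.sum_apply, Matrix.map_apply, hP, Matrix.smul_apply, smul_eq_mul]
    push_cast
    rfl
  have harg : (-(Complex.I * (τ : ℂ))) • A.map (fun x : ℝ => (x : ℂ)) = φ c := by
    show _ = ∑ r, c r • P r
    rw [hAc, Finset.smul_sum]
    exact Finset.sum_congr rfl fun r _ => by rw [smul_smul]
  have hUeq : U = ∑ r, Complex.exp (c r) • P r := by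
    have h1 : U = NormedSpace.exp (φ c) := by rw [hUdef, qwalk, ← harg]
    have h2 : NormedSpace.exp (φ c) = φ (NormedSpace.exp c) :=
      (NormedSpace.map_exp φ hφc c).symm
    have h3 : NormedSpace.exp c = fun r => Complex.exp (c r) := by
      rw [Pi.exp_def]
      funext r
      rw [Complex.exp_eq_exp_ℂ]
    rw [h1, h2, h3]
    rfl
  have hUapp : ∀ i j, U i j = ∑ r, Complex.exp (c r) * ((E r i j : ℝ) : ℂ) := by
    intro i j
    rw [hUeq]
    simp [Matrix.sum_apply, hP, Matrix.map_apply]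
  -- entries from the revival hypothesis
  have hba : b ≠ a := Ne.symm hab
  have hUcol : ∀ x, U x a = α * eC a x + β * eC b x := by
    intro x
    have h := congrFun hrev x
    simpa [eC, Matrix.mulVec_single, smul_eq_mul] using h
  have hUaa : U a a = α := by
    have := hUcol a
    simpa [eC, Pi.single_apply, hba] using this
  have hUba : U b a = β := by
    have := hUcol b
    simpa [eC, Pi.single_apply, hab] using this
  have hUab : U a b = β := by
    rw [hUapp a b, ← hUba, hUapp b a]
    exact Finset.sum_congr rfl fun r _ => by rw [hEs r a b]
  -- strong cospectrality gives E r b b = E r a a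
  have hEbb : ∀ r, E r b b = E r a a := by
    intro r
    rcases hsc r with h | h
    · have ha' := congrFun h a
      have hb' := congrFun h b
      simp only [eR, Matrix.mulVec_single_one, Matrix.col_apply, mul_one] at ha' hb'
      have hsym := hEs r a b
      linarith
    · have ha' := congrFun h a
      have hb' := congrFun h b
      simp only [eR, Matrix.mulVec_single_one, Matrix.col_apply, mul_one, Pi.neg_apply] at ha' hb'
      have hsym := hEs r a b
      linarith
  have hUbb : U b b = α := by
    rw [hUapp b b, ← hUaa, hUapp a a]
    exact Finset.sum_congr rfl fun r _ => by rw [hEbb r]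
  -- unitarity
  have hPH : ∀ r, (P r)ᴴ = P r := by
    intro r; ext i j
    simp only [Matrix.conjTranspose_apply, hP, Matrix.map_apply, Complex.star_def,
      Complex.conj_ofReal]
    rw [hEs r j i]
  have hconjc : ∀ r, (starRingEnd ℂ) (c r) = -(c r) := by
    intro r
    simp only [hc, _root_.map_mul, map_neg, Complex.conj_I, Complex.conj_ofReal]
    ring
  have hUH : Uᴴ * U = 1 := by
    rw [hUeq]
    have hH : (∑ r, Complex.exp (c r) • P r)ᴴ = ∑ r, Complex.exp (-(c r)) • P r := by
      rw [Matrix.conjTranspose_sum]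
      refine Finset.sum_congr rfl fun r _ => ?_
      rw [Matrix.conjTranspose_smul, hPH]
      congr 1
      rw [Complex.star_def, ← Complex.exp_conj, hconjc]
    rw [hH, Finset.sum_mul_sum]
    simp_rw [smul_mul_smul_comm, hPmul, smul_ite, smul_zero, Finset.sum_ite_eq,
      Finset.mem_univ, if_true, ← Complex.exp_add, neg_add_cancel, Complex.exp_zero, one_smul]
    exact hPsum
  have horthog : ∑ x, (starRingEnd ℂ) (U x a) * U x b = 0 := by
    have h := congrFun (congrFun hUH a) b
    rw [Matrix.mul_apply] at h
    simp only [Matrix.conjTranspose_apply, Complex.star_def] at h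
    rwa [Matrix.one_apply_ne hab] at h
  -- conclude the key relation
  have hkey : (starRingEnd ℂ) α * β + (starRingEnd ℂ) β * α = 0 := by
    have hsum1 : ∑ x, (starRingEnd ℂ) (U x a) * U x b
        = (starRingEnd ℂ) α * U a b + (starRingEnd ℂ) β * U b b := by
      have hterm : ∀ x, (starRingEnd ℂ) (U x a) * U x b
          = (starRingEnd ℂ) α * (eC a x * U x b) + (starRingEnd ℂ) β * (eC b x * U x b) := by
        intro x
        rw [hUcol x]
        have hca : (starRingEnd ℂ) (eC a x) = eC a x := by
          simp [eC, Pi.single_apply, apply_ite]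
        have hcb : (starRingEnd ℂ) (eC b x) = eC b x := by
          simp [eC, Pi.single_apply, apply_ite]
        rw [map_add, _root_.map_mul, _root_.map_mul, hca, hcb]
        ring
      rw [Finset.sum_congr rfl fun x _ => hterm x]
      rw [Finset.sum_add_distrib, ← Finset.mul_sum, ← Finset.mul_sum]
      have hea : ∑ x, eC a x * U x b = U a b := by
        simp [eC, Pi.single_apply, ite_mul, zero_mul, one_mul]
      have heb : ∑ x, eC b x * U x b = U b b := by
        simp [eC, Pi.single_apply, ite_mul, zero_mul, one_mul]
      rw [hea, heb]
    rw [hsum1, hUab, hUbb] at horthog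
    exact horthog
  exact trig_step α β hnorm hkey
end

section
/- Let a,b be strongly cospectral vertices of a connected graph with largest eigenvalue θ_0. Then (e^{iζ}cos γ, i e^{iζ} sin γ)-revival occurs from a to b at time τ if and only if ζ = -τθ_0 - γ and for every eigenvalue θ_r in the eigenvalue support of a: τ(θ_0 - θ_r) ≡ 0 (mod 2π) when E_r e_a = E_r e_b, and τ(θ_0 - θ_r) ≡ -2γ (mod 2π) when E_r e_a = -E_r e_b. -/
open Matrix Complex BigOperators

open scoped Nat

lemma spectral_pow {n m : ℕ} (c : Fin m → ℂ) (F : Fin m → Matrix (Fin n) (Fin n) ℂ)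
    (hsum : ∑ r, F r = 1)
    (horth : ∀ r s, F r * F s = if r = s then F r else 0) (k : ℕ) :
    (∑ r, c r • F r) ^ k = ∑ r, (c r ^ k) • F r := by
  induction k with
  | zero => simpa using hsum.symm
  | succ k ih =>
    rw [pow_succ, ih, Finset.sum_mul_sum]
    refine Finset.sum_congr rfl fun r _ => ?_
    simp only [smul_mul_assoc, mul_smul_comm, horth, smul_ite, smul_zero, smul_smul,
      Finset.sum_ite_eq, Finset.mem_univ, if_true, pow_succ, mul_comm]

lemma spectral_exp {n m : ℕ} (c : Fin m → ℂ) (F : Fin m → Matrix (Fin n) (Fin n) ℂ)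
    (hsum : ∑ r, F r = 1)
    (horth : ∀ r s, F r * F s = if r = s then F r else 0) :
    NormedSpace.exp (∑ r, c r • F r) = ∑ r, Complex.exp (c r) • F r := by
  have hS : ∀ r : Fin m, Summable (fun k : ℕ => ((k ! : ℂ))⁻¹ * c r ^ k) := by
    intro r
    simpa [smul_eq_mul] using NormedSpace.expSeries_summable' (𝕂 := ℂ) (c r)
  rw [NormedSpace.exp_eq_tsum (𝕂 := ℂ)]
  calc (∑' k : ℕ, ((k !:ℂ))⁻¹ • (∑ r, c r • F r) ^ k)
      = ∑' k : ℕ, ∑ r, (((k !:ℂ))⁻¹ * c r ^ k) • F r := by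
        refine tsum_congr fun k => ?_
        rw [spectral_pow c F hsum horth k, Finset.smul_sum]
        simp [smul_smul]
    _ = ∑ r, ∑' k : ℕ, (((k !:ℂ))⁻¹ * c r ^ k) • F r := by
        refine Summable.tsum_finsetSum fun r _ => ?_
        exact (hS r).smul_const _
    _ = ∑ r, Complex.exp (c r) • F r := by
        refine Finset.sum_congr rfl fun r _ => ?_
        rw [Summable.tsum_smul_const (hS r)]
        congr 1
        rw [Complex.exp_eq_exp_ℂ, NormedSpace.exp_eq_tsum (𝕂 := ℂ)]
        simp [smul_eq_mul]

lemma exp_I_eq_iff (x y : ℝ) :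
    Complex.exp (Complex.I * x) = Complex.exp (Complex.I * y) ↔
      ∃ k : ℤ, x = y + 2 * Real.pi * k := by
  rw [Complex.exp_eq_exp_iff_exists_int]
  constructor
  · rintro ⟨k, hk⟩
    refine ⟨k, ?_⟩
    have h : (x : ℂ) = y + 2 * Real.pi * k := by
      apply mul_left_cancel₀ Complex.I_ne_zero
      rw [hk]; ring
    exact_mod_cast h
  · rintro ⟨k, hk⟩
    refine ⟨k, ?_⟩
    have h : (x : ℂ) = y + 2 * Real.pi * k := by exact_mod_cast hk
    rw [h]; ring

lemma smul_cancel {n : ℕ} {v : Fin n → ℂ} (hv : v ≠ 0) {α β : ℂ} (h : α • v = β • v) : α = β := by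
  by_contra hne
  apply hv
  funext i
  have h2 := congrFun h i
  simp only [Pi.smul_apply, smul_eq_mul] at h2
  by_contra hvi
  exact hne (mul_right_cancel₀ hvi h2)

lemma sum_mulVec_helper {n m : ℕ} (M : Fin m → Matrix (Fin n) (Fin n) ℂ) (v : Fin n → ℂ) :
    (∑ r, M r) *ᵥ v = ∑ r, M r *ᵥ v := by
  funext i
  simp only [Matrix.mulVec, dotProduct, Matrix.sum_apply, Finset.sum_apply, Finset.sum_mul]
  exact Finset.sum_comm

/-- Characterization of fractional revival between strongly cospectral vertices:
(e^{iζ}cos γ, i e^{iζ}sin γ)-revival occurs at time τ iff ζ = -τθ₀ - γ (mod 2π) and,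
for every eigenvalue θ_r in the support of a, τ(θ₀ - θ_r) ≡ 0 (mod 2π) when
E_r e_a = E_r e_b, and ≡ -2γ (mod 2π) when E_r e_a = -E_r e_b. -/
theorem stmt3 {n m : ℕ} (A : Matrix (Fin n) (Fin n) ℝ) (hA : A.IsSymm)
    (θ : Fin m → ℝ) (E : Fin m → Matrix (Fin n) (Fin n) ℝ) (r0 : Fin m)
    (hdecomp : A = ∑ r, θ r • E r)
    (hsum : ∑ r, E r = 1)
    (hsymm : ∀ r, (E r).IsSymm)
    (horth : ∀ r s, E r * E s = if r = s then E r else 0)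
    (hmax : ∀ r, θ r ≤ θ r0)
    (a b : Fin n) (hab : a ≠ b)
    (hsc : ∀ r, E r *ᵥ eR a = E r *ᵥ eR b ∨ E r *ᵥ eR a = -(E r *ᵥ eR b))
    (hPerron : E r0 *ᵥ eR a = E r0 *ᵥ eR b)
    (hsupp0 : E r0 *ᵥ eR a ≠ 0)
    (τ γ ζ : ℝ) :
    ((qwalk A τ) *ᵥ eC a =
        (Complex.exp (Complex.I * ζ) * Real.cos γ) • eC a +
        (Complex.I * Complex.exp (Complex.I * ζ) * Real.sin γ) • eC b) ↔
    ((∃ k : ℤ, ζ = -τ * θ r0 - γ + 2 * Real.pi * k) ∧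
      ∀ r, E r *ᵥ eR a ≠ 0 →
        ((E r *ᵥ eR a = E r *ᵥ eR b → ∃ k : ℤ, τ * (θ r0 - θ r) = 2 * Real.pi * k) ∧
         (E r *ᵥ eR a = -(E r *ᵥ eR b) →
            ∃ k : ℤ, τ * (θ r0 - θ r) = -2 * γ + 2 * Real.pi * k))) := by
  classical
  set F : Fin m → Matrix (Fin n) (Fin n) ℂ := fun r => (E r).map (fun x => (x : ℂ)) with hF
  set c : Fin m → ℂ := fun r => -(Complex.I * (τ:ℂ)) * (θ r : ℂ) with hc
  set Ca : ℂ := Complex.exp (Complex.I * ζ) * Real.cos γ with hCa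
  set Cb : ℂ := Complex.I * Complex.exp (Complex.I * ζ) * Real.sin γ with hCb
  -- complexified projectors
  have hFsum : ∑ r, F r = 1 := by
    ext i j
    have h1 : (∑ r, E r) i j = (1 : Matrix (Fin n) (Fin n) ℝ) i j := by rw [hsum]
    simp only [Matrix.sum_apply, Matrix.one_apply] at h1
    simp only [Matrix.sum_apply, Matrix.one_apply, hF, Matrix.map_apply]
    rw [← Complex.ofReal_sum, h1]
    split <;> simp
  have horthF : ∀ r s, F r * F s = if r = s then F r else 0 := by
    intro r s
    have : ((E r * E s).map (fun x : ℝ => (x:ℂ))) = F r * F s := by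
      simp only [hF]
      exact Matrix.map_mul (f := Complex.ofRealHom)
    rw [← this, horth r s]
    split <;> simp [hF]
  -- vectors
  set w : Fin m → Fin n → ℂ := fun r i => ((E r *ᵥ eR a) i : ℂ) with hw
  set u : Fin m → Fin n → ℂ := fun r i => ((E r *ᵥ eR b) i : ℂ) with hu
  have hwF : ∀ r, F r *ᵥ eC a = w r := by
    intro r
    funext i
    simp [hw, hF, Matrix.mulVec, dotProduct, eC, eR, Pi.single_apply, mul_ite,
      Complex.ofReal_sum]
  have huF : ∀ r, F r *ᵥ eC b = u r := by
    intro r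
    funext i
    simp [hu, hF, Matrix.mulVec, dotProduct, eC, eR, Pi.single_apply, mul_ite,
      Complex.ofReal_sum]
  have hw0 : ∀ r, w r = 0 ↔ E r *ᵥ eR a = 0 := by
    intro r
    constructor <;> intro h
    · funext i
      have := congrFun h i
      simpa [hw] using this
    · funext i
      simp [hw, h]
  have hu0 : ∀ r, E r *ᵥ eR a = 0 → u r = 0 := by
    intro r h
    rcases hsc r with h2 | h2
    · funext i; simp [hu, ← h2, h]
    · have : E r *ᵥ eR b = 0 := by
        have := h2.symm.trans h
        simpa [neg_eq_zero] using this
      funext i; simp [hu, this]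
  have hwu_p : ∀ r, E r *ᵥ eR a = E r *ᵥ eR b → w r = u r := by
    intro r h; funext i; simp [hw, hu, h]
  have hwu_m : ∀ r, E r *ᵥ eR a = -(E r *ᵥ eR b) → w r = -u r := by
    intro r h; funext i; simp [hw, hu, h]
  -- the walk
  have hAC : (-(Complex.I * (τ:ℂ))) • A.map (fun x : ℝ => (x : ℂ)) = ∑ r, c r • F r := by
    ext i j
    simp only [Matrix.smul_apply, Matrix.map_apply, Matrix.sum_apply, hc, hF, smul_eq_mul]
    rw [hdecomp]
    simp only [Matrix.sum_apply, Matrix.smul_apply, smul_eq_mul]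
    rw [Complex.ofReal_sum, Finset.mul_sum]
    refine Finset.sum_congr rfl fun r _ => ?_
    push_cast
    ring
  have hqwalk : qwalk A τ *ᵥ eC a = ∑ r, Complex.exp (c r) • w r := by
    rw [qwalk, hAC, spectral_exp c F hFsum horthF, sum_mulVec_helper _ _]
    refine Finset.sum_congr rfl fun r _ => ?_
    rw [Matrix.smul_mulVec, hwF]
  have hlin : ∀ (M : Matrix (Fin n) (Fin n) ℂ) (g : Fin m → Fin n → ℂ),
      M *ᵥ (∑ r, g r) = ∑ r, M *ᵥ g r := by
    intro M g
    exact map_sum (Matrix.mulVecLin M) g Finset.univ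
  have hproj : ∀ s r, F s *ᵥ w r = if s = r then w r else 0 := by
    intro s r
    rw [← hwF r, Matrix.mulVec_mulVec, horthF]
    split
    · rename_i h; subst h; rw [hwF]
    · rw [Matrix.zero_mulVec]
  have hproju : ∀ s r, F s *ᵥ u r = if s = r then u r else 0 := by
    intro s r
    rw [← huF r, Matrix.mulVec_mulVec, horthF]
    split
    · rename_i h; subst h; rw [huF]
    · rw [Matrix.zero_mulVec]
  have heCa : eC a = ∑ r, w r := by
    have : (1 : Matrix (Fin n) (Fin n) ℂ) *ᵥ eC a = ∑ r, w r := by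
      rw [← hFsum, sum_mulVec_helper _ _]
      exact Finset.sum_congr rfl fun r _ => hwF r
    simpa [Matrix.one_mulVec] using this
  have heCb : eC b = ∑ r, u r := by
    have : (1 : Matrix (Fin n) (Fin n) ℂ) *ᵥ eC b = ∑ r, u r := by
      rw [← hFsum, sum_mulVec_helper _ _]
      exact Finset.sum_congr rfl fun r _ => huF r
    simpa [Matrix.one_mulVec] using this
  -- step 1: reduce to per-eigenspace equations
  have hmain : (qwalk A τ *ᵥ eC a = Ca • eC a + Cb • eC b) ↔
      ∀ s, Complex.exp (c s) • w s = Ca • w s + Cb • u s := by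
    constructor
    · intro h s
      rw [hqwalk] at h
      have h2 := congrArg (fun v => F s *ᵥ v) h
      simp only [Matrix.mulVec_add] at h2
      rw [hlin] at h2
      have hL : ∑ r, F s *ᵥ Complex.exp (c r) • w r = Complex.exp (c s) • w s := by
        have : ∀ r, F s *ᵥ Complex.exp (c r) • w r
            = if s = r then Complex.exp (c r) • w r else 0 := by
          intro r
          rw [Matrix.mulVec_smul, hproj]
          split <;> simp
        rw [Finset.sum_congr rfl fun r _ => this r]
        simp
      rw [hL, Matrix.mulVec_smul, Matrix.mulVec_smul, hwF, huF] at h2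
      exact h2
    · intro h
      rw [hqwalk, heCa, heCb, Finset.smul_sum, Finset.smul_sum, ← Finset.sum_add_distrib]
      exact Finset.sum_congr rfl fun s _ => h s
  rw [hmain]
  -- scalar identities
  have hplus : Ca + Cb = Complex.exp (Complex.I * ((ζ + γ : ℝ) : ℂ)) := by
    rw [hCa, hCb, Complex.ofReal_cos, Complex.ofReal_sin]
    push_cast
    rw [show Complex.I * ((ζ:ℂ) + γ) = Complex.I * ζ + (γ:ℂ) * Complex.I by ring,
      Complex.exp_add, Complex.exp_mul_I]
    ring
  have hminus : Ca - Cb = Complex.exp (Complex.I * ((ζ - γ : ℝ) : ℂ)) := by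
    rw [hCa, hCb, Complex.ofReal_cos, Complex.ofReal_sin]
    push_cast
    rw [show Complex.I * ((ζ:ℂ) - γ) = Complex.I * ζ + (-(γ:ℂ)) * Complex.I by ring,
      Complex.exp_add, Complex.exp_mul_I]
    simp [Complex.cos_neg, Complex.sin_neg]
    ring
  have hcs : ∀ s, Complex.exp (c s) = Complex.exp (Complex.I * ((-(τ * θ s) : ℝ) : ℂ)) := by
    intro s
    congr 1
    simp only [hc]
    push_cast
    ring
  constructor
  · intro H
    -- from the r0 equation, pin down ζ
    have hw0ne : w r0 ≠ 0 := fun h => hsupp0 ((hw0 r0).1 h)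
    have h0 : Complex.exp (c r0) = Ca + Cb := by
      have := H r0
      rw [hwu_p r0 hPerron] at this
      have h2 : Complex.exp (c r0) • u r0 = (Ca + Cb) • u r0 := by
        rw [add_smul]; exact this
      have hune : u r0 ≠ 0 := by
        rw [← hwu_p r0 hPerron]; exact hw0ne
      exact smul_cancel hune h2
    rw [hcs, hplus, exp_I_eq_iff] at h0
    obtain ⟨k0, hk0⟩ := h0
    constructor
    · exact ⟨-k0, by push_cast; linarith⟩
    · intro r hne
      have hwne : w r ≠ 0 := fun h => hne ((hw0 r).1 h)
      constructor
      · intro hp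
        have := H r
        rw [hwu_p r hp] at this
        have h2 : Complex.exp (c r) • u r = (Ca + Cb) • u r := by
          rw [add_smul]; exact this
        have hune : u r ≠ 0 := by rw [← hwu_p r hp]; exact hwne
        have h3 := smul_cancel hune h2
        rw [hcs, hplus, exp_I_eq_iff] at h3
        obtain ⟨k, hk⟩ := h3
        exact ⟨k - k0, by push_cast; rw [mul_sub]; linarith⟩
      · intro hp
        have := H r
        rw [hwu_m r hp] at this
        have h2 : Complex.exp (c r) • (-u r) = (Ca - Cb) • (-u r) := by
          rw [sub_smul, this]
          simp only [smul_neg]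
          abel
        have hune : (-u r) ≠ 0 := by
          rw [← hwu_m r hp]; exact hwne
        have h3 := smul_cancel hune h2
        rw [hcs, hminus, exp_I_eq_iff] at h3
        obtain ⟨k, hk⟩ := h3
        exact ⟨k - k0, by push_cast; rw [mul_sub]; linarith⟩
  · rintro ⟨⟨k0, hk0⟩, hall⟩ s
    by_cases hz : E s *ᵥ eR a = 0
    · have h1 : w s = 0 := (hw0 s).2 hz
      have h2 := hu0 s hz
      rw [h1, h2]
      simp
    · have hwne : w s ≠ 0 := fun h => hz ((hw0 s).1 h)
      rcases hsc s with hp | hp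
      · obtain ⟨k, hk⟩ := (hall s hz).1 hp
        have h3 : Complex.exp (c s) = Ca + Cb := by
          rw [hcs, hplus, exp_I_eq_iff]
          exact ⟨k - k0, by push_cast; rw [mul_sub] at hk; linarith⟩
        rw [h3, hwu_p s hp, add_smul]
      · obtain ⟨k, hk⟩ := (hall s hz).2 hp
        have h3 : Complex.exp (c s) = Ca - Cb := by
          rw [hcs, hminus, exp_I_eq_iff]
          exact ⟨k - k0, by push_cast; rw [mul_sub] at hk; linarith⟩
        rw [h3, hwu_m s hp, sub_smul]
        simp only [smul_neg, sub_neg_eq_add]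
end

section
/- Let Φ be a finite set of real algebraic integers closed under algebraic conjugation such that for all θ_i,θ_j,θ_r,θ_s ∈ Φ with θ_r ≠ θ_s, (θ_i-θ_j)/(θ_r-θ_s) is rational. Then every element of Φ is an integer or a quadratic algebraic integer; moreover there exist integers a, Δ (square-free) and integers b_r such that every θ ∈ Φ has the form θ = (a + b_r√Δ)/2 for some r. -/
open Polynomial

private lemma ratInt (q : ℚ) (h : IsIntegral ℤ (q:ℝ)) : ∃ m : ℤ, (m:ℚ) = q := by
  have h2 : IsIntegral ℤ q := IsIntegral.tower_bot_of_field (B := ℝ) (by simpa using h)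
  exact IsIntegrallyClosed.isIntegral_iff.mp h2

private lemma mpcoeff (θ : ℝ) (h : IsIntegral ℤ θ) (i : ℕ) :
    ∃ m : ℤ, ((m:ℚ)) = (minpoly ℚ θ).coeff i := by
  rw [minpoly.isIntegrallyClosed_eq_field_fractions' ℚ h]
  exact ⟨(minpoly ℤ θ).coeff i, by simp⟩

private lemma sfden {Δ : ℤ} (hΔ : Squarefree Δ) {q : ℚ} {m : ℤ} (h : (q:ℚ)^2 * (Δ:ℚ) = m) :
    ∃ b : ℤ, (b:ℚ) = q := by
  have hq : (q.num : ℚ) = q * q.den := by exact_mod_cast (Rat.mul_den_eq_num q).symm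
  have key : q.num^2 * Δ = m * (q.den:ℤ)^2 := by
    have : (q.num:ℚ)^2 * Δ = (m:ℚ) * (q.den:ℚ)^2 := by
      rw [hq]
      calc (q * q.den)^2 * Δ = q^2 * Δ * (q.den:ℚ)^2 := by ring
      _ = (m:ℚ) * (q.den:ℚ)^2 := by rw [h]
    exact_mod_cast this
  have hco : IsCoprime ((q.den:ℤ)) (q.num) := by
    rw [Int.isCoprime_iff_gcd_eq_one, Int.gcd, Int.natAbs_natCast, Nat.coprime_comm.mp q.reduced]
  have hdvd : ((q.den:ℤ))^2 ∣ Δ := by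
    refine IsCoprime.dvd_of_dvd_mul_right (z := q.num^2) (hco.pow) ?_
    exact ⟨m, by linarith [key]⟩
  have : IsUnit ((q.den:ℤ)) := hΔ _ (by rwa [← sq])
  have hd1 : q.den = 1 := by
    have := Int.isUnit_iff.mp this
    omega
  exact ⟨q.num, (Rat.den_eq_one_iff q).mp hd1⟩

private lemma quadratic_minpoly {θ : ℝ} (hi : IsIntegral ℤ θ) (c f : ℚ) (D : ℤ) (hD : 0 ≤ D)
    (hθ : θ = (c:ℝ) + (f:ℝ) * Real.sqrt (D:ℝ)) (hirr : Irrational θ) :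
    (∃ m1 : ℤ, (m1:ℚ) = 2*c) ∧ (∃ m0 : ℤ, (m0:ℚ) = c^2 - f^2*D) := by
  have hQ : IsIntegral ℚ θ := hi.tower_top
  set p : ℚ[X] := X^2 - C (2*c) * X + C (c^2 - f^2*D) with hp
  have hsq : Real.sqrt (D:ℝ) ^ 2 = (D:ℝ) := Real.sq_sqrt (by exact_mod_cast hD)
  have hp0 : aeval θ p = 0 := by
    simp only [hp, map_add, map_sub, map_pow, map_mul, aeval_X, aeval_C, eq_ratCast]
    rw [hθ]
    push_cast
    linear_combination ((f:ℝ))^2 * hsq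
  have hpm : p.Monic := by simp only [hp]; monicity!
  have hdvd : minpoly ℚ θ ∣ p := minpoly.dvd _ _ hp0
  have hdeg2 : 2 ≤ (minpoly ℚ θ).natDegree := by
    rw [minpoly.two_le_natDegree_iff hQ]
    intro hmem
    obtain ⟨y, hy⟩ := hmem
    exact hirr ⟨y, by rw [← hy]; simp⟩
  have hpdeg : p.natDegree = 2 := by simp only [hp]; compute_degree!
  have heq : minpoly ℚ θ = p := by
    refine Polynomial.eq_of_dvd_of_natDegree_le_of_leadingCoeff hdvd ?_ ?_
    · rw [hpdeg]; exact hdeg2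
    · rw [(minpoly.monic hQ).leadingCoeff, hpm.leadingCoeff]
  constructor
  · obtain ⟨m, hm⟩ := mpcoeff θ hi 1
    refine ⟨-m, ?_⟩
    rw [heq] at hm
    have : p.coeff 1 = -(2*c) := by
      simp only [hp, coeff_add, coeff_sub, coeff_C_mul, coeff_X_pow, coeff_C, coeff_X_one,
        Polynomial.coeff_X, if_true, if_false]
      norm_num
    rw [this] at hm
    push_cast
    linarith [hm]
  · obtain ⟨m, hm⟩ := mpcoeff θ hi 0
    refine ⟨m, ?_⟩
    rw [heq] at hm
    have : p.coeff 0 = c^2 - f^2*D := by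
      simp only [hp, coeff_add, coeff_sub, coeff_C_mul, coeff_X_pow, coeff_C, coeff_X_one,
        Polynomial.coeff_X, if_true, if_false]
      norm_num
    rw [this] at hm
    exact hm

set_option maxHeartbeats 1000000

/-- A set of real algebraic integers, closed under algebraic (Galois) conjugation,
whose pairwise eigenvalue-difference ratios are all rational, consists of integers or
quadratic algebraic integers, all of the form (a + b_r √Δ)/2 for fixed a and
square-free Δ. -/
theorem stmt5 (Φ : Finset ℝ)
    (hint : ∀ θ ∈ Φ, IsIntegral ℤ θ)
    (hconj : ∀ θ ∈ Φ, ∀ z : ℂ, Polynomial.aeval z (minpoly ℚ θ) = 0 →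
      ∃ θ' ∈ Φ, (θ' : ℂ) = z)
    (hratio : ∀ θi ∈ Φ, ∀ θj ∈ Φ, ∀ θr ∈ Φ, ∀ θs ∈ Φ, θr ≠ θs →
      ∃ q : ℚ, θi - θj = q * (θr - θs)) :
    (∀ θ ∈ Φ, (minpoly ℚ θ).natDegree ≤ 2) ∧
    ∃ (a Δ : ℤ), Squarefree Δ ∧
      ∀ θ ∈ Φ, ∃ b : ℤ, θ = (a + b * Real.sqrt Δ) / 2 := by
  classical
  have hQ : ∀ θ ∈ Φ, IsIntegral ℚ θ := fun θ h => (hint θ h).tower_top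
  set L := IntermediateField.adjoin ℚ ((Φ : Set ℝ)) with hLdef
  haveI : FiniteDimensional ℚ L :=
    IntermediateField.finiteDimensional_adjoin (fun x hx => hQ x hx)
  have hmem : ∀ θ ∈ Φ, θ ∈ L := fun θ h => IntermediateField.subset_adjoin ℚ _ h
  let σ₀ : L →ₐ[ℚ] ℂ := (Complex.ofRealAm.restrictScalars ℚ).comp L.val
  have key : ∀ θ (hθ : θ ∈ Φ) (σ : L →ₐ[ℚ] ℂ), ∃ θ' ∈ Φ, (θ':ℂ) = σ ⟨θ, hmem θ hθ⟩ := by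
    intro θ hθ σ
    apply hconj θ hθ
    have h1 : minpoly ℚ (⟨θ, hmem θ hθ⟩ : L) = minpoly ℚ θ :=
      (minpoly.algebraMap_eq (B := L) (B' := ℝ) (A := ℚ)
        (algebraMap L ℝ).injective ⟨θ, hmem θ hθ⟩).symm
    rw [← h1, Polynomial.aeval_algHom_apply, minpoly.aeval, map_zero]
  have htr : ∀ x : L, (((Algebra.trace ℚ L x : ℚ)) : ℂ) = ∑ σ : L →ₐ[ℚ] ℂ, σ x := by
    intro x
    have := _root_.trace_eq_sum_embeddings (E := ℂ) (K := ℚ) (L := L) (x := x)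
    rwa [show (algebraMap ℚ ℂ) (Algebra.trace ℚ L x) = ((Algebra.trace ℚ L x : ℚ) : ℂ) by
      simp [eq_ratCast]] at this
  set N := Fintype.card (L →ₐ[ℚ] ℂ) with hN
  have hNpos : 0 < N := @Fintype.card_pos _ _ ⟨σ₀⟩
  by_cases hcase : ∀ θ ∈ Φ, ∀ θ' ∈ Φ, θ = θ'
  · -- degenerate case : all elements equal, hence rational integers
    have hratθ : ∀ θ ∈ Φ, ∃ m : ℤ, θ = (m:ℝ) := by
      intro θ hθ
      have hsum := htr ⟨θ, hmem θ hθ⟩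
      have heach : ∀ σ : L →ₐ[ℚ] ℂ, σ ⟨θ, hmem θ hθ⟩ = (θ:ℂ) := by
        intro σ
        obtain ⟨θ', hθ', he⟩ := key θ hθ σ
        rw [← he, hcase θ' hθ' θ hθ]
      rw [Finset.sum_congr rfl (fun σ _ => heach σ), Finset.sum_const, Finset.card_univ,
        nsmul_eq_mul] at hsum
      have hreal : ((Algebra.trace ℚ L ⟨θ, hmem θ hθ⟩ : ℚ) : ℝ) = (N:ℝ) * θ := by
        exact_mod_cast hsum
      have hθq : θ = (((Algebra.trace ℚ L ⟨θ, hmem θ hθ⟩ : ℚ) / N : ℚ) : ℝ) := by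
        have hN0 : (N:ℝ) ≠ 0 := by positivity
        push_cast
        field_simp
        linarith [hreal]
      obtain ⟨m, hm⟩ := ratInt _ (by rw [← hθq]; exact hint θ hθ)
      exact ⟨m, by rw [hθq, ← hm]; norm_num⟩
    constructor
    · intro θ hθ
      obtain ⟨m, rfl⟩ := hratθ θ hθ
      have : (minpoly ℚ ((m:ℤ):ℝ)).natDegree = 1 := by
        rw [minpoly.natDegree_eq_one_iff]
        exact ⟨(m:ℚ), by push_cast; norm_num⟩
      omega
    · refine ⟨0, 1, squarefree_one, ?_⟩
      intro θ hθ
      obtain ⟨m, rfl⟩ := hratθ θ hθ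
      refine ⟨2*m, ?_⟩
      push_cast
      rw [Real.sqrt_one]
      ring
  · -- main case
    push_neg at hcase
    obtain ⟨θr, hr, θs, hs, hne⟩ := hcase
    have hδ0 : θr - θs ≠ 0 := sub_ne_zero.mpr hne
    set xδ : L := ⟨θr, hmem θr hr⟩ - ⟨θs, hmem θs hs⟩ with hxδ
    have hδC0 : ((θr:ℂ) - (θs:ℂ)) ≠ 0 := by
      rw [← Complex.ofReal_sub]
      exact_mod_cast hδ0
    have hA : ∀ σ : L →ₐ[ℚ] ℂ, ∃ q : ℚ, σ xδ = (q:ℂ) * ((θr:ℂ) - (θs:ℂ)) := by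
      intro σ
      obtain ⟨θr', hr', her⟩ := key θr hr σ
      obtain ⟨θs', hs', hes⟩ := key θs hs σ
      obtain ⟨q, hq⟩ := hratio θr' hr' θs' hs' θr hr θs hs hne
      refine ⟨q, ?_⟩
      rw [hxδ, map_sub, ← her, ← hes]
      have : ((θr' - θs' : ℝ) : ℂ) = ((q * (θr - θs) : ℝ) : ℂ) := by exact_mod_cast hq
      push_cast at this ⊢
      linear_combination this
    choose qf hqf using hA
    have hq1 : qf σ₀ = 1 := by
      have h0 : σ₀ xδ = (θr:ℂ) - (θs:ℂ) := by rw [hxδ, map_sub]; rfl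
      have := hqf σ₀
      rw [h0] at this
      have : (qf σ₀ : ℂ) = 1 := by
        field_simp at this
        tauto
      exact_mod_cast this
    set S : ℚ := ∑ σ : L →ₐ[ℚ] ℂ, (qf σ)^2 with hS
    have hSpos : 0 < S := by
      have h1 : (1:ℚ) ≤ S := by
        rw [hS]
        have := Finset.single_le_sum (f := fun σ : L →ₐ[ℚ] ℂ => (qf σ)^2)
          (fun i _ => sq_nonneg _) (Finset.mem_univ σ₀)
        simpa [hq1] using this
      linarith
    obtain ⟨r, hB⟩ : ∃ r : ℚ, (θr - θs)^2 = (r:ℝ) := by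
      refine ⟨(Algebra.trace ℚ L (xδ^2)) / S, ?_⟩
      have hsum := htr (xδ^2)
      have heach : ∀ σ : L →ₐ[ℚ] ℂ, σ (xδ^2) = ((qf σ)^2 : ℚ) * ((θr:ℂ) - (θs:ℂ))^2 := by
        intro σ
        rw [map_pow, hqf σ]
        push_cast
        ring
      rw [Finset.sum_congr rfl (fun σ _ => heach σ), ← Finset.sum_mul] at hsum
      have hsum2 : ((Algebra.trace ℚ L (xδ^2) : ℚ) : ℂ) = (S:ℂ) * ((θr:ℂ) - (θs:ℂ))^2 := by
        rw [hsum, hS]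
        push_cast
        ring
      have hreal : (Algebra.trace ℚ L (xδ^2) : ℝ) = (S:ℝ) * (θr - θs)^2 := by
        exact_mod_cast hsum2
      have hS0 : (S:ℝ) ≠ 0 := by positivity
      push_cast
      rw [eq_div_iff hS0]
      linarith [hreal]
    have hC : ∀ θ ∈ Φ, ∃ c g : ℚ, θ = (c:ℝ) + (g:ℝ) * (θr - θs) := by
      intro θ hθ
      have h1 : ∀ σ : L →ₐ[ℚ] ℂ, ∃ q' : ℚ,
          σ ⟨θ, hmem θ hθ⟩ = (θ:ℂ) + (q':ℂ) * ((θr:ℂ) - (θs:ℂ)) := by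
        intro σ
        obtain ⟨θ', hθ', he⟩ := key θ hθ σ
        obtain ⟨q', hq'⟩ := hratio θ' hθ' θ hθ θr hr θs hs hne
        refine ⟨q', ?_⟩
        rw [← he]
        have : ((θ' - θ : ℝ) : ℂ) = ((q' * (θr - θs) : ℝ) : ℂ) := by exact_mod_cast hq'
        push_cast at this ⊢
        linear_combination this
      choose q' hq' using h1
      have hsum := htr ⟨θ, hmem θ hθ⟩
      rw [Finset.sum_congr rfl (fun σ _ => hq' σ)] at hsum
      rw [Finset.sum_add_distrib, Finset.sum_const, Finset.card_univ, nsmul_eq_mul,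
        ← Finset.sum_mul] at hsum
      have hsum2 : ((Algebra.trace ℚ L ⟨θ, hmem θ hθ⟩ : ℚ) : ℂ)
          = (N:ℂ) * (θ:ℂ) + ((∑ σ : L →ₐ[ℚ] ℂ, q' σ : ℚ) : ℂ) * ((θr:ℂ) - (θs:ℂ)) := by
        rw [hsum]
        push_cast
        ring
      have hreal : ((Algebra.trace ℚ L ⟨θ, hmem θ hθ⟩ : ℚ) : ℝ)
          = (N:ℝ) * θ + ((∑ σ : L →ₐ[ℚ] ℂ, q' σ : ℚ) : ℝ) * (θr - θs) := by
        exact_mod_cast hsum2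
      set T : ℚ := Algebra.trace ℚ L ⟨θ, hmem θ hθ⟩
      set Q : ℚ := ∑ σ : L →ₐ[ℚ] ℂ, q' σ
      refine ⟨T / N, -(Q / N), ?_⟩
      have hN0 : (N:ℝ) ≠ 0 := by positivity
      push_cast
      field_simp
      linarith [hreal]
    -- first conjunct
    have deg2 : ∀ θ ∈ Φ, (minpoly ℚ θ).natDegree ≤ 2 := by
      intro θ hθ
      obtain ⟨c, g, hcg⟩ := hC θ hθ
      set p : ℚ[X] := X^2 - C (2*c) * X + C (c^2 - g^2*r) with hp
      have hp0 : aeval θ p = 0 := by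
        simp only [hp, map_add, map_sub, map_pow, map_mul, aeval_X, aeval_C, eq_ratCast]
        rw [hcg]
        push_cast
        linear_combination ((g:ℝ))^2 * hB
      have hpm : p.Monic := by simp only [hp]; monicity!
      have hpdeg : p.natDegree = 2 := by simp only [hp]; compute_degree!
      have := Polynomial.natDegree_le_of_dvd (minpoly.dvd _ _ hp0) hpm.ne_zero
      omega
    refine ⟨deg2, ?_⟩
    have hrpos : 0 < r := by
      have h0 : (0:ℝ) < (r:ℝ) := by rw [← hB]; positivity
      exact_mod_cast h0
    obtain ⟨A, B, hBA, hsf⟩ := Nat.sq_mul_squarefree (r.num * (r.den:ℤ)).toNat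
    have hnn : 0 < r.num * (r.den:ℤ) := by
      have h1 : 0 < r.num := Rat.num_pos.mpr hrpos
      have h2 : (0:ℤ) < (r.den:ℤ) := by exact_mod_cast r.pos
      positivity
    have hBA' : ((B:ℤ))^2 * (A:ℤ) = r.num * r.den := by
      have := Int.toNat_of_nonneg hnn.le
      rw [← this]
      exact_mod_cast hBA
    have hB0 : 0 < B := by
      rcases Nat.eq_zero_or_pos B with h | h
      · exfalso; rw [h] at hBA'; push_cast at hBA'; nlinarith [hnn]
      · exact h
    have hA0 : 0 < A := by
      rcases Nat.eq_zero_or_pos A with h | h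
      · exfalso; rw [h] at hBA'; push_cast at hBA'; nlinarith [hnn]
      · exact h
    set t0 : ℚ := (B:ℚ) / (r.den:ℚ) with ht0def
    have hdenpos : (0:ℚ) < (r.den:ℚ) := by exact_mod_cast r.pos
    have ht0pos : 0 < t0 := by
      apply div_pos _ hdenpos
      exact_mod_cast hB0
    have hrt0 : r = t0^2 * (A:ℚ) := by
      have hnum : (r.num:ℚ) = r * r.den := by exact_mod_cast (Rat.mul_den_eq_num r).symm
      have hBAq : ((B:ℚ))^2 * (A:ℚ) = (r.num:ℚ) * (r.den:ℚ) := by exact_mod_cast hBA'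
      rw [ht0def, div_pow, div_mul_eq_mul_div, eq_div_iff (by positivity : ((r.den:ℚ))^2 ≠ 0)]
      rw [hnum] at hBAq
      linear_combination -hBAq
    have hsqrtr : Real.sqrt (r:ℝ) = (t0:ℝ) * Real.sqrt ((A:ℕ):ℝ) := by
      have h1 : ((r:ℝ)) = ((t0:ℝ))^2 * ((A:ℕ):ℝ) := by exact_mod_cast congrArg (Rat.cast : ℚ → ℝ) hrt0
      have ht0r : (0:ℝ) ≤ (t0:ℝ) := by exact_mod_cast ht0pos.le
      rw [h1, Real.sqrt_mul (by positivity), Real.sqrt_sq ht0r]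
    have habs : |θr - θs| = Real.sqrt (r:ℝ) := by rw [← hB, Real.sqrt_sq_eq_abs]
    obtain ⟨t, htne, hδt⟩ : ∃ t : ℚ, t ≠ 0 ∧ (θr - θs) = (t:ℝ) * Real.sqrt ((A:ℕ):ℝ) := by
      rcases le_or_gt 0 (θr - θs) with h | h
      · exact ⟨t0, ne_of_gt ht0pos, by rw [← abs_of_nonneg h, habs, hsqrtr]⟩
      · refine ⟨-t0, by simp [ne_of_gt ht0pos], ?_⟩
        have h2 : -(θr - θs) = (t0:ℝ) * Real.sqrt ((A:ℕ):ℝ) := by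
          rw [← abs_of_neg h, habs, hsqrtr]
        push_cast
        linear_combination -h2
    by_cases hA1 : A = 1
    · refine ⟨0, 1, squarefree_one, ?_⟩
      intro θ hθ
      obtain ⟨c, g, hcg⟩ := hC θ hθ
      have hδrat : θr - θs = ((t:ℚ):ℝ) := by
        rw [hδt, hA1]
        norm_num
      have hθrat : θ = ((c + g*t : ℚ):ℝ) := by rw [hcg, hδrat]; push_cast; ring
      obtain ⟨m, hm⟩ := ratInt _ (hθrat ▸ hint θ hθ)
      refine ⟨2*m, ?_⟩
      rw [hθrat, ← hm]
      push_cast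
      rw [Real.sqrt_one]
      ring
    · have hAsq : ¬ IsSquare A := by
        rintro ⟨k, hk⟩
        have hu : IsUnit k := hsf k (by rw [hk])
        rw [Nat.isUnit_iff] at hu
        rw [hu] at hk
        exact hA1 (by omega)
      have hirr : Irrational (Real.sqrt ((A:ℕ):ℝ)) := irrational_sqrt_natCast_iff.mpr hAsq
      have hirrδ : Irrational (θr - θs) := by rw [hδt]; exact hirr.ratCast_mul htne
      obtain ⟨c, gr, hcr⟩ := hC θr hr
      have hcommon : ∀ θ ∈ Φ, ∃ f : ℚ, θ = (c:ℝ) + (f:ℝ) * Real.sqrt ((A:ℕ):ℝ) := by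
        intro θ hθ
        obtain ⟨c', g', hcg⟩ := hC θ hθ
        obtain ⟨q, hq⟩ := hratio θ hθ θr hr θr hr θs hs hne
        have hlin : ((c' - c : ℚ):ℝ) = ((q + gr - g' : ℚ):ℝ) * (θr - θs) := by
          push_cast
          linear_combination hq - hcg + hcr
        have hq0 : q + gr - g' = 0 := by
          by_contra hne0
          apply hirrδ
          refine ⟨(c' - c)/(q + gr - g'), ?_⟩
          have hne0' : ((q:ℝ) + (gr:ℝ) - (g':ℝ)) ≠ 0 := by exact_mod_cast hne0
          push_cast
          push_cast at hlin
          rw [div_eq_iff hne0']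
          linear_combination hlin
        have hceq : c' = c := by
          have h1 : ((c' - c : ℚ):ℝ) = 0 := by
            rw [hlin, show ((q + gr - g' : ℚ):ℝ) = 0 by exact_mod_cast hq0]
            ring
          have h2 : (c' - c : ℚ) = 0 := by exact_mod_cast h1
          linarith [h2]
        refine ⟨g' * t, ?_⟩
        rw [hcg, hceq, hδt]
        push_cast
        ring
      obtain ⟨fr, hfr⟩ := hcommon θr hr
      obtain ⟨fs, hfs⟩ := hcommon θs hs
      have hfrs : fr ≠ fs := by
        intro h
        apply hδ0
        rw [hfr, hfs, h]
        ring
      have hexists : ∃ θt ∈ Φ, ∃ ft : ℚ, ft ≠ 0 ∧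
          θt = (c:ℝ) + (ft:ℝ) * Real.sqrt ((A:ℕ):ℝ) := by
        by_cases h : fr = 0
        · exact ⟨θs, hs, fs, fun hh => hfrs (h.trans hh.symm), hfs⟩
        · exact ⟨θr, hr, fr, h, hfr⟩
      obtain ⟨θt, hst, ft, hft0, hft⟩ := hexists
      have hirrst : Irrational θt := by
        rw [hft]
        exact (hirr.ratCast_mul hft0).ratCast_add (q := c)
      obtain ⟨⟨a1, ha1⟩, -⟩ := quadratic_minpoly (hint θt hst) c ft (A:ℤ)
        (by positivity) (by exact_mod_cast hft) hirrst
      have h2c : (a1:ℝ) = 2*(c:ℝ) := by exact_mod_cast ha1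
      refine ⟨a1, (A:ℤ), Int.squarefree_natCast.mpr hsf, ?_⟩
      intro θ hθ
      obtain ⟨f, hf⟩ := hcommon θ hθ
      by_cases hf0 : f = 0
      · refine ⟨0, ?_⟩
        rw [hf, hf0]
        push_cast
        rw [h2c]
        ring
      · have hirrθ : Irrational θ := by
          rw [hf]
          exact (hirr.ratCast_mul hf0).ratCast_add (q := c)
        obtain ⟨⟨a1', ha1'⟩, ⟨m0, hm0⟩⟩ := quadratic_minpoly (hint θ hθ) c f (A:ℤ)
          (by positivity) (by exact_mod_cast hf) hirrθ
        have hkey : ((2*f : ℚ))^2 * (((A:ℤ)):ℚ) = (((a1'^2 - 4*m0 : ℤ)):ℚ) := by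
          push_cast at hm0 ⊢
          linear_combination (-((a1':ℚ) + 2*c)) * ha1' + 4*hm0
        obtain ⟨b, hb⟩ := sfden (Int.squarefree_natCast.mpr hsf) hkey
        refine ⟨b, ?_⟩
        rw [hf]
        have hbr : (b:ℝ) = 2*(f:ℝ) := by exact_mod_cast hb
        push_cast
        rw [h2c, hbr]
        ring
end

section
/- Suppose (e^{iζ}cos γ, i e^{iζ}sin γ)-revival occurs between strongly cospectral vertices a and b at time τ, with γ = (p/q)π for coprime integers p, q. Then the graph is periodic at a (and at b) at time qτ, i.e. U(qτ)e_a is a unimodular multiple of e_a; and if q is even then U((q/2)τ)e_a is a unimodular multiple of e_b (perfect state transfer at time qτ/2). -/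
open Matrix Complex BigOperators

section Aux

lemma mapc_mul {n : ℕ} (M N : Matrix (Fin n) (Fin n) ℝ) :
    (M * N).map (fun x => (x : ℂ)) = M.map (fun x => (x : ℂ)) * N.map (fun x => (x : ℂ)) := by
  ext i j
  simp [Matrix.mul_apply, Matrix.map_apply]

lemma mapc_mulVec {n : ℕ} (M : Matrix (Fin n) (Fin n) ℝ) (v : Fin n → ℝ) :
    M.map (fun x => (x : ℂ)) *ᵥ (fun i => ((v i : ℝ) : ℂ)) = fun i => (((M *ᵥ v) i : ℝ) : ℂ) := by
  funext i
  simp [Matrix.mulVec, dotProduct, Matrix.map_apply]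

lemma eC_eq {V : Type*} [DecidableEq V] (a : V) :
    eC a = fun i => ((eR a i : ℝ) : ℂ) := by
  funext i
  by_cases h : i = a <;> simp [eC, eR, Pi.single_apply, h]

lemma sum_mulVec' {n : ℕ} {ι : Type*} (s : Finset ι) (M : ι → Matrix (Fin n) (Fin n) ℂ)
    (x : Fin n → ℂ) : (∑ i ∈ s, M i) *ᵥ x = ∑ i ∈ s, M i *ᵥ x := by
  classical
  induction s using Finset.induction_on with
  | empty => simp [Matrix.zero_mulVec]
  | insert _ _ h ih => simp [Finset.sum_insert h, Matrix.add_mulVec, ih]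

lemma mulVec_sumv {n : ℕ} {ι : Type*} (s : Finset ι) (M : Matrix (Fin n) (Fin n) ℂ)
    (x : ι → Fin n → ℂ) : M *ᵥ (∑ i ∈ s, x i) = ∑ i ∈ s, M *ᵥ x i := by
  classical
  induction s using Finset.induction_on with
  | empty => simp [Matrix.mulVec_zero]
  | insert _ _ h ih => simp [Finset.sum_insert h, Matrix.mulVec_add, ih]

lemma qwalk_add {n : ℕ} (A : Matrix (Fin n) (Fin n) ℝ) (s t : ℝ) :
    qwalk A (s + t) = qwalk A s * qwalk A t := by
  unfold qwalk
  have h : (-(Complex.I * ((s + t : ℝ) : ℂ))) • A.map (fun x => (x : ℂ)) =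
      (-(Complex.I * (s : ℂ))) • A.map (fun x => (x : ℂ)) +
      (-(Complex.I * (t : ℂ))) • A.map (fun x => (x : ℂ)) := by
    rw [← add_smul]
    congr 1
    push_cast
    ring
  rw [h]
  exact Matrix.exp_add_of_commute _ _ (((Commute.refl _).smul_left _).smul_right _)

lemma qwalk_zero {n : ℕ} (A : Matrix (Fin n) (Fin n) ℝ) : qwalk A 0 = 1 := by
  unfold qwalk
  simp [NormedSpace.exp_zero]

lemma qwalk_eig {n : ℕ} (A : Matrix (Fin n) (Fin n) ℝ) (τ : ℝ) (v : Fin n → ℂ) (l : ℂ)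
    (hl : l ≠ 0) (h : qwalk A τ *ᵥ v = l • v) (k : ℤ) :
    qwalk A ((k : ℝ) * τ) *ᵥ v = (l ^ k) • v := by
  have hnat : ∀ N : ℕ, qwalk A ((N : ℝ) * τ) *ᵥ v = (l ^ N) • v := by
    intro N
    induction N with
    | zero => simp [qwalk_zero]
    | succ N ih =>
      have h1 : ((N + 1 : ℕ) : ℝ) * τ = τ + (N : ℝ) * τ := by push_cast; ring
      rw [h1, qwalk_add, ← Matrix.mulVec_mulVec, ih, Matrix.mulVec_smul, h, smul_smul, ← pow_succ]
  rcases k.eq_nat_or_neg with ⟨N, hN | hN⟩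
  · subst hN
    rw [zpow_natCast]
    simpa using hnat N
  · subst hN
    have h1 := hnat N
    have h2 : qwalk A (((-(N : ℤ) : ℤ) : ℝ) * τ) *ᵥ (qwalk A ((N : ℝ) * τ) *ᵥ v) = v := by
      rw [Matrix.mulVec_mulVec, ← qwalk_add]
      have h3 : ((-(N : ℤ) : ℤ) : ℝ) * τ + (N : ℝ) * τ = 0 := by push_cast; ring
      rw [h3, qwalk_zero, Matrix.one_mulVec]
    rw [h1, Matrix.mulVec_smul] at h2
    have hln : (l ^ N) ≠ 0 := pow_ne_zero _ hl
    have h4 : qwalk A (((-(N : ℤ) : ℤ) : ℝ) * τ) *ᵥ v = (l ^ N)⁻¹ • v := by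
      have := congrArg (fun x => (l ^ N)⁻¹ • x) h2
      simpa [smul_smul, inv_mul_cancel₀ hln] using this
    rw [h4, _root_.zpow_neg, zpow_natCast]

lemma exp_real_zpow (c : ℝ) (k : ℤ) :
    Complex.exp ((c : ℂ) * Complex.I) ^ k = Complex.exp ((((k : ℝ) * c : ℝ) : ℂ) * Complex.I) := by
  rw [← Complex.exp_int_mul]
  congr 1
  push_cast
  ring

lemma exp_shift (x y : ℝ) (j : ℤ) (h : x = y + (j : ℝ) * (2 * Real.pi)) :
    Complex.exp ((x : ℂ) * Complex.I) = Complex.exp ((y : ℂ) * Complex.I) := by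
  subst h
  push_cast
  rw [add_mul, Complex.exp_add]
  have h2 : ((j : ℂ)) * (2 * (Real.pi : ℂ)) * Complex.I = (j : ℂ) * (2 * Real.pi * Complex.I) := by
    ring
  rw [h2, Complex.exp_int_mul_two_pi_mul_I, mul_one]

lemma exp_shift_pi (x y : ℝ) (j : ℤ) (h : x = y + Real.pi + (j : ℝ) * (2 * Real.pi)) :
    Complex.exp ((x : ℂ) * Complex.I) = -Complex.exp ((y : ℂ) * Complex.I) := by
  subst h
  push_cast
  rw [add_mul, add_mul, Complex.exp_add, Complex.exp_add, Complex.exp_pi_mul_I]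
  have h2 : ((j : ℂ)) * (2 * (Real.pi : ℂ)) * Complex.I = (j : ℂ) * (2 * Real.pi * Complex.I) := by
    ring
  rw [h2, Complex.exp_int_mul_two_pi_mul_I]
  ring

lemma scalar_combo (ζ γ ε : ℝ) (hε : ε = 1 ∨ ε = -1) :
    Complex.exp (Complex.I * ζ) * Real.cos γ +
      (Complex.I * Complex.exp (Complex.I * ζ) * Real.sin γ) * ε
      = Complex.exp ((↑(ζ + ε * γ) : ℂ) * Complex.I) := by
  have h1 : Complex.exp ((↑(ζ + ε * γ) : ℂ) * Complex.I)
      = Complex.exp (Complex.I * (ζ : ℂ)) * Complex.exp ((↑(ε * γ) : ℂ) * Complex.I) := by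
    rw [← Complex.exp_add]
    congr 1
    push_cast
    ring
  rw [h1, Complex.exp_mul_I, ← Complex.ofReal_cos, ← Complex.ofReal_sin]
  rcases hε with h | h <;> subst h <;>
    simp only [one_mul, neg_one_mul, Real.cos_neg, Real.sin_neg, Complex.ofReal_neg] <;> push_cast <;> ring

end Aux

/-- If (e^{iζ}cos γ, i e^{iζ}sin γ)-revival occurs between strongly cospectral vertices
at time τ with γ = (p/q)π for coprime p, q, then the graph is periodic at a and at b at
time qτ; and if q is even, say q = 2m, perfect state transfer occurs at time mτ. -/
theorem stmt6 {n m : ℕ} (A : Matrix (Fin n) (Fin n) ℝ) (hA : A.IsSymm)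
    (θ : Fin m → ℝ) (E : Fin m → Matrix (Fin n) (Fin n) ℝ)
    (hdecomp : A = ∑ r, θ r • E r)
    (hsum : ∑ r, E r = 1)
    (hsymm : ∀ r, (E r).IsSymm)
    (horth : ∀ r s, E r * E s = if r = s then E r else 0)
    (a b : Fin n) (hab : a ≠ b)
    (hsc : ∀ r, E r *ᵥ eR a = E r *ᵥ eR b ∨ E r *ᵥ eR a = -(E r *ᵥ eR b))
    (τ γ ζ : ℝ) (p q : ℤ) (hq : q ≠ 0) (hcop : IsCoprime p q)
    (hγ : γ = (p / q : ℚ) * Real.pi)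
    (hβ : Real.sin γ ≠ 0)
    (hrev : (qwalk A τ) *ᵥ eC a =
        (Complex.exp (Complex.I * ζ) * Real.cos γ) • eC a +
        (Complex.I * Complex.exp (Complex.I * ζ) * Real.sin γ) • eC b) :
    (∃ μ : ℂ, ‖μ‖ = 1 ∧ (qwalk A ((q : ℝ) * τ)) *ᵥ eC a = μ • eC a) ∧
    (∃ μ : ℂ, ‖μ‖ = 1 ∧ (qwalk A ((q : ℝ) * τ)) *ᵥ eC b = μ • eC b) ∧
    (∀ k : ℤ, q = 2 * k →
      ∃ μ : ℂ, ‖μ‖ = 1 ∧ (qwalk A ((k : ℝ) * τ)) *ᵥ eC a = μ • eC b) := by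
  classical
  have hqR : (q : ℝ) ≠ 0 := Int.cast_ne_zero.mpr hq
  have hγ' : (q : ℝ) * γ = (p : ℝ) * Real.pi := by
    rw [hγ]
    push_cast
    field_simp
  -- complex projections and vectors
  set Em : Fin m → Matrix (Fin n) (Fin n) ℂ := fun s => (E s).map (fun x => (x : ℂ)) with hEm
  set v : Fin m → Fin n → ℂ := fun s i => (((E s *ᵥ eR a) i : ℝ) : ℂ) with hvdef
  set w : Fin m → Fin n → ℂ := fun s i => (((E s *ᵥ eR b) i : ℝ) : ℂ) with hwdef
  set ε : Fin m → ℝ := fun s => if E s *ᵥ eR a = E s *ᵥ eR b then 1 else -1 with hεdef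
  have hε1 : ∀ s, ε s = 1 ∨ ε s = -1 := by
    intro s
    by_cases h : E s *ᵥ eR a = E s *ᵥ eR b <;> simp [hεdef, h]
  have hw : ∀ s, w s = (ε s : ℂ) • v s := by
    intro s
    by_cases h : E s *ᵥ eR a = E s *ᵥ eR b
    · funext i
      simp [hwdef, hvdef, hεdef, h]
    · have h2 : E s *ᵥ eR a = -(E s *ᵥ eR b) := (hsc s).resolve_left h
      funext i
      have h3 : (E s *ᵥ eR b) i = -((E s *ᵥ eR a) i) := by
        have h4 := congrFun h2 i
        simp only [Pi.neg_apply] at h4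
        linarith
      simp [hwdef, hvdef, hεdef, h, h3]
  have hEmva : ∀ s, Em s *ᵥ eC a = v s := by
    intro s
    rw [eC_eq a, hEm]
    exact mapc_mulVec _ _
  have hEmvb : ∀ s, Em s *ᵥ eC b = w s := by
    intro s
    rw [eC_eq b, hEm]
    exact mapc_mulVec _ _
  have hsumEm : ∑ s, Em s = 1 := by
    ext i j
    have h0 : ∑ s, E s i j = (if i = j then (1 : ℝ) else 0) := by
      have h1 := congrFun (congrFun hsum i) j
      simpa [Matrix.sum_apply, Matrix.one_apply] using h1
    simp only [Matrix.sum_apply, hEm, Matrix.map_apply, Matrix.one_apply]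
    rw [show (∑ s, ((E s i j : ℝ) : ℂ)) = ((∑ s, E s i j : ℝ) : ℂ) by push_cast; rfl, h0]
    split_ifs <;> simp
  have hvsum : ∑ s, v s = eC a := by
    calc ∑ s, v s = ∑ s, Em s *ᵥ eC a := by simp [hEmva]
    _ = (∑ s, Em s) *ᵥ eC a := (sum_mulVec' _ _ _).symm
    _ = eC a := by rw [hsumEm, Matrix.one_mulVec]
  have hwsum : ∑ s, w s = eC b := by
    calc ∑ s, w s = ∑ s, Em s *ᵥ eC b := by simp [hEmvb]
    _ = (∑ s, Em s) *ᵥ eC b := (sum_mulVec' _ _ _).symm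
    _ = eC b := by rw [hsumEm, Matrix.one_mulVec]
  -- commutation
  have hAEc : ∀ t s, qwalk A t * Em s = Em s * qwalk A t := by
    intro t s
    have h1 : A * E s = θ s • E s := by
      conv_lhs => rw [hdecomp]
      rw [Finset.sum_mul]
      simp_rw [smul_mul_assoc, horth]
      rw [Finset.sum_eq_single s (fun r _ hr => by simp [hr]) (by simp)]
      simp
    have h2 : E s * A = θ s • E s := by
      conv_lhs => rw [hdecomp]
      rw [Finset.mul_sum]
      simp_rw [mul_smul_comm, horth]
      rw [Finset.sum_eq_single s (fun r _ hr => by simp [Ne.symm hr]) (by simp)]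
      simp
    have h3 : Commute ((-(Complex.I * (t : ℂ))) • A.map (fun x => (x : ℂ))) (Em s) := by
      apply Commute.smul_left
      show A.map _ * Em s = Em s * A.map _
      rw [hEm, ← mapc_mul, ← mapc_mul, h1, h2]
    exact Commute.exp_left h3
  -- eigenvectors
  set lam : Fin m → ℂ := fun s => Complex.exp ((↑(ζ + ε s * γ) : ℂ) * Complex.I) with hlamdef
  have heig : ∀ s, qwalk A τ *ᵥ v s = lam s • v s := by
    intro s
    have h1 : Em s *ᵥ (qwalk A τ *ᵥ eC a) = qwalk A τ *ᵥ v s := by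
      rw [Matrix.mulVec_mulVec, ← hAEc τ s, ← Matrix.mulVec_mulVec, hEmva]
    rw [hrev, Matrix.mulVec_add, Matrix.mulVec_smul, Matrix.mulVec_smul, hEmva, hEmvb, hw s]
      at h1
    rw [← h1, smul_smul, ← add_smul, scalar_combo ζ γ (ε s) (hε1 s)]
  have hlam0 : ∀ s, lam s ≠ 0 := fun s => Complex.exp_ne_zero _
  have heigk : ∀ s (k : ℤ), qwalk A ((k : ℝ) * τ) *ᵥ v s = (lam s ^ k) • v s :=
    fun s k => qwalk_eig A τ (v s) (lam s) (hlam0 s) (heig s) k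
  have heigkw : ∀ s (k : ℤ), qwalk A ((k : ℝ) * τ) *ᵥ w s = (lam s ^ k) • w s := by
    intro s k
    rw [hw s, Matrix.mulVec_smul, heigk s k, smul_smul, smul_smul,
      mul_comm ((ε s : ℂ)) (lam s ^ k)]
  -- eigenvalue powers at time qτ
  have hlamq : ∀ s, lam s ^ q =
      Complex.exp ((↑((q : ℝ) * ζ + (p : ℝ) * Real.pi) : ℂ) * Complex.I) := by
    intro s
    rw [hlamdef]
    simp only
    rw [exp_real_zpow]
    rcases hε1 s with h | h
    · exact exp_shift _ _ 0 (by rw [h]; push_cast; linear_combination hγ')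
    · exact exp_shift _ _ (-p) (by rw [h]; push_cast; linear_combination -hγ')
  refine ⟨⟨Complex.exp ((↑((q : ℝ) * ζ + (p : ℝ) * Real.pi) : ℂ) * Complex.I),
      Complex.norm_exp_ofReal_mul_I _, ?_⟩,
    ⟨Complex.exp ((↑((q : ℝ) * ζ + (p : ℝ) * Real.pi) : ℂ) * Complex.I),
      Complex.norm_exp_ofReal_mul_I _, ?_⟩, ?_⟩
  · rw [← hvsum, mulVec_sumv]
    calc ∑ s, qwalk A ((q : ℝ) * τ) *ᵥ v s
        = ∑ s, Complex.exp ((↑((q : ℝ) * ζ + (p : ℝ) * Real.pi) : ℂ) * Complex.I) • v s := by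
          refine Finset.sum_congr rfl fun s _ => ?_
          rw [heigk s q, hlamq s]
      _ = _ := by rw [← Finset.smul_sum, hvsum]
  · rw [← hwsum, mulVec_sumv]
    calc ∑ s, qwalk A ((q : ℝ) * τ) *ᵥ w s
        = ∑ s, Complex.exp ((↑((q : ℝ) * ζ + (p : ℝ) * Real.pi) : ℂ) * Complex.I) • w s := by
          refine Finset.sum_congr rfl fun s _ => ?_
          rw [heigkw s q, hlamq s]
      _ = _ := by rw [← Finset.smul_sum, hwsum]
  · intro k hk
    have hkγ : (k : ℝ) * γ = (p : ℝ) * Real.pi / 2 := by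
      rw [hk] at hγ'
      push_cast at hγ'
      linarith
    have hpodd : Odd p := by
      rcases Int.even_or_odd p with he | ho
      · exfalso
        have h2p : (2 : ℤ) ∣ p := he.two_dvd
        have h2q : (2 : ℤ) ∣ q := ⟨k, hk⟩
        have hu := hcop.isUnit_of_dvd' h2p h2q
        rw [Int.isUnit_iff] at hu
        omega
      · exact ho
    obtain ⟨j, hj⟩ := hpodd
    have hjr : (p : ℝ) = 2 * (j : ℝ) + 1 := by exact_mod_cast hj
    have hlamk : ∀ s, lam s ^ k =
        (ε s : ℂ) * Complex.exp ((↑((k : ℝ) * ζ + (p : ℝ) * Real.pi / 2) : ℂ) * Complex.I) := by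
      intro s
      rw [hlamdef]
      simp only
      rw [exp_real_zpow]
      rcases hε1 s with h | h
      · rw [exp_shift _ ((k : ℝ) * ζ + (p : ℝ) * Real.pi / 2) 0
          (by rw [h]; push_cast; linear_combination hkγ), h]
        push_cast
        ring
      · rw [exp_shift_pi _ ((k : ℝ) * ζ + (p : ℝ) * Real.pi / 2) (-(j + 1))
          (by rw [h]; push_cast; linear_combination -hkγ - Real.pi * hjr), h]
        push_cast
        ring
    refine ⟨Complex.exp ((↑((k : ℝ) * ζ + (p : ℝ) * Real.pi / 2) : ℂ) * Complex.I),
      Complex.norm_exp_ofReal_mul_I _, ?_⟩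
    rw [← hvsum, mulVec_sumv, ← hwsum]
    calc ∑ s, qwalk A ((k : ℝ) * τ) *ᵥ v s
        = ∑ s, Complex.exp ((↑((k : ℝ) * ζ + (p : ℝ) * Real.pi / 2) : ℂ) * Complex.I) •
            ((ε s : ℂ) • v s) := by
          refine Finset.sum_congr rfl fun s _ => ?_
          rw [heigk s k, hlamk s, smul_smul, mul_comm ((ε s : ℂ))]
      _ = _ := by
          rw [← Finset.smul_sum]
          congr 1
          exact Finset.sum_congr rfl fun s _ => (hw s).symm
end

section
/- Suppose (e^{iζ}cos γ, ie^{iζ}sin γ)-revival occurs between strongly cospectral vertices a and b at time τ with γ/π irrational. Then pretty good state transfer occurs between a and b: for every ε > 0 there is a time t and a unimodular complex ν with ‖U(t)e_a − ν e_b‖ < ε. -/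
open Matrix Complex BigOperators

open scoped ComplexConjugate

private lemma cos_small {γ : ℝ} (hirr : Irrational (γ / Real.pi)) :
    ∀ δ : ℝ, 0 < δ → ∃ k : ℕ, |Real.cos (k * γ)| < δ := by
  intro δ hδ
  have hdense : Dense ((AddSubgroup.closure ({γ, Real.pi} : Set ℝ) : AddSubgroup ℝ) : Set ℝ) := by
    rcases (AddSubgroup.closure ({γ, Real.pi} : Set ℝ)).dense_or_cyclic with h | ⟨x, hx⟩
    · exact h
    · exfalso
      have hγ : γ ∈ AddSubgroup.closure ({γ, Real.pi} : Set ℝ) :=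
        AddSubgroup.subset_closure (by simp)
      have hπ : Real.pi ∈ AddSubgroup.closure ({γ, Real.pi} : Set ℝ) :=
        AddSubgroup.subset_closure (by simp)
      rw [hx, AddSubgroup.mem_closure_singleton] at hγ hπ
      obtain ⟨p, hp⟩ := hγ
      obtain ⟨q, hq⟩ := hπ
      have hx0 : x ≠ 0 := by
        rintro rfl
        rw [smul_zero] at hq
        exact Real.pi_ne_zero hq.symm
      have hq0 : (q : ℝ) ≠ 0 := by
        intro h
        have : q = 0 := by exact_mod_cast h
        rw [this, zero_zsmul] at hq
        exact Real.pi_ne_zero hq.symm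
      refine hirr ⟨(p : ℚ) / (q : ℚ), ?_⟩
      have : γ / Real.pi = (p : ℝ) / (q : ℝ) := by
        rw [← hp, ← hq, zsmul_eq_mul, zsmul_eq_mul,
          mul_div_mul_right _ _ hx0]
      rw [this]
      push_cast
      ring
  obtain ⟨y, hyS, hy⟩ := Metric.mem_closure_iff.mp (hdense (Real.pi/2)) δ hδ
  have hyS' : y ∈ AddSubgroup.closure ({γ, Real.pi} : Set ℝ) := hyS
  rw [AddSubgroup.mem_closure_pair] at hyS'
  obtain ⟨mm, nn, hmn⟩ := hyS'
  have h1 : |Real.cos y| < δ := by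
    have hcy : Real.cos y = Real.sin (Real.pi/2 - y) := (Real.sin_pi_div_two_sub y).symm
    rw [hcy]
    calc |Real.sin (Real.pi/2 - y)| ≤ |Real.pi/2 - y| := Real.abs_sin_le_abs
      _ < δ := by rw [Real.dist_eq] at hy; exact hy
  have h2 : |Real.cos ((mm : ℝ) * γ)| = |Real.cos y| := by
    rw [← hmn, zsmul_eq_mul, zsmul_eq_mul]
    have he : (mm:ℝ)*γ + (nn:ℝ)*Real.pi = (nn:ℝ)*Real.pi - (-((mm:ℝ)*γ)) := by ring
    rw [he, Real.cos_int_mul_pi_sub, Real.cos_neg, abs_mul]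
    rcases Int.even_or_odd nn with hpar | hpar
    · rw [hpar.neg_one_zpow, abs_one, one_mul]
    · rw [hpar.neg_one_zpow, abs_neg, abs_one, one_mul]
  refine ⟨mm.natAbs, ?_⟩
  have h3 : ((mm.natAbs : ℕ) : ℝ) = |(mm : ℝ)| := by
    rw [Nat.cast_natAbs, Int.cast_abs]
  rw [h3]
  rcases abs_choice ((mm : ℝ)) with h | h <;> rw [h]
  · rw [h2]; exact h1
  · rw [neg_mul, Real.cos_neg, h2]; exact h1

private lemma pow_mulVec_eig {n : ℕ} (M : Matrix (Fin n) (Fin n) ℂ) (x : Fin n → ℂ) (c : ℂ)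
    (h : M *ᵥ x = c • x) (k : ℕ) : (M ^ k) *ᵥ x = c ^ k • x := by
  induction k with
  | zero => simp [Matrix.one_mulVec]
  | succ k ih =>
      rw [pow_succ, ← Matrix.mulVec_mulVec, h, Matrix.mulVec_smul, ih, smul_smul, ← pow_succ']

private lemma qwalk_eCb {n : ℕ} (A : Matrix (Fin n) (Fin n) ℝ) (hA : A.IsSymm)
    (a b : Fin n) (hab : a ≠ b)
    (τ γ ζ : ℝ)
    (hβ : Real.sin γ ≠ 0)
    (hrev : (qwalk A τ) *ᵥ eC a =
        (Complex.exp (Complex.I * ζ) * Real.cos γ) • eC a +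
        (Complex.I * Complex.exp (Complex.I * ζ) * Real.sin γ) • eC b) :
    (qwalk A τ) *ᵥ eC b =
        (Complex.I * Complex.exp (Complex.I * ζ) * Real.sin γ) • eC a +
        (Complex.exp (Complex.I * ζ) * Real.cos γ) • eC b := by
  set Ac : Matrix (Fin n) (Fin n) ℂ := A.map (fun x => (x : ℂ)) with hAcdef
  set α : ℂ := Complex.exp (Complex.I * ζ) * Real.cos γ with hα
  set β : ℂ := Complex.I * Complex.exp (Complex.I * ζ) * Real.sin γ with hβ'
  set W : Matrix (Fin n) (Fin n) ℂ := qwalk A τ with hWdef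
  have hAcT : Acᵀ = Ac := by
    rw [hAcdef, ← Matrix.transpose_map, hA]
  have hAcH : Acᴴ = Ac := by
    rw [hAcdef]
    ext i j
    simp only [Matrix.conjTranspose_apply, Matrix.map_apply, Complex.conj_ofReal, RCLike.star_def]
    exact_mod_cast congrFun (congrFun hA i) j
  have hWsym : Wᵀ = W := by
    rw [hWdef]
    show (NormedSpace.exp ((-(Complex.I * (τ : ℂ))) • Ac))ᵀ = _
    rw [← Matrix.exp_transpose, Matrix.transpose_smul, hAcT]
    rfl
  have hWH : Wᴴ = NormedSpace.exp ((Complex.I * (τ:ℂ)) • Ac) := by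
    rw [hWdef]
    show (NormedSpace.exp ((-(Complex.I * (τ : ℂ))) • Ac))ᴴ = _
    rw [← Matrix.exp_conjTranspose, Matrix.conjTranspose_smul, hAcH]
    congr 1
    simp
  have hcomm : Commute ((Complex.I * (τ:ℂ)) • Ac) ((-(Complex.I * (τ:ℂ))) • Ac) :=
    ((Commute.refl Ac).smul_left _).smul_right _
  have hUnit : Wᴴ * W = 1 := by
    rw [hWH, hWdef]
    show _ * NormedSpace.exp ((-(Complex.I * (τ : ℂ))) • Ac) = 1
    rw [← Matrix.exp_add_of_commute _ _ hcomm, ← add_smul]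
    simp [NormedSpace.exp_zero]
  have hUnit' : W * Wᴴ = 1 := by
    rw [hWH, hWdef]
    show NormedSpace.exp ((-(Complex.I * (τ : ℂ))) • Ac) * _ = 1
    rw [← Matrix.exp_add_of_commute _ _ hcomm.symm, ← add_smul]
    simp [NormedSpace.exp_zero]
  -- column a entries
  have hcol : ∀ j, W j a = if j = a then α else if j = b then β else 0 := by
    intro j
    have h1 := congrFun hrev j
    simp only [eC, Matrix.mulVec_single, MulOpposite.op_one, one_smul, Matrix.col_apply, Pi.add_apply, Pi.smul_apply, Pi.single_apply,
      smul_eq_mul, mul_one] at h1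
    rw [h1]
    by_cases hja : j = a
    · simp [hja, (show ¬ a = b from hab)]
    · by_cases hjb : j = b <;> simp [hja, hjb, Ne.symm hab]
  -- symmetry: row a
  have hWab : W a b = β := by
    have : Wᵀ b a = W b a := by rw [hWsym]
    rw [Matrix.transpose_apply] at this
    rw [this, hcol b, if_neg (Ne.symm hab), if_pos rfl]
  have hw1 : Complex.exp (Complex.I * ζ) * conj (Complex.exp (Complex.I * ζ)) = 1 := by
    rw [← Complex.exp_conj, ← Complex.exp_add]
    simp
  have hβne : β ≠ 0 := by
    rw [hβ']
    apply mul_ne_zero (mul_ne_zero Complex.I_ne_zero (Complex.exp_ne_zero _))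
    exact Complex.ofReal_ne_zero.mpr hβ
  have hconjβne : conj β ≠ 0 := by
    simpa using hβne
  -- W b b = α via unitarity
  have hWbb : W b b = α := by
    have h2 : ∑ j, conj (W j a) * W j b = 0 := by
      have := congrFun (congrFun hUnit a) b
      simpa [Matrix.mul_apply, Matrix.conjTranspose_apply, Matrix.one_apply, hab] using this
    have h3 : ∀ j, conj (W j a) * W j b =
        (if j = a then conj α * W a b else 0) + (if j = b then conj β * W j b else 0) := by
      intro j
      rw [hcol j]
      by_cases hja : j = a
      · subst hja; simp [hab]
      · by_cases hjb : j = b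
        · subst hjb; simp [Ne.symm hab]
        · simp [hja, hjb]
    rw [Finset.sum_congr rfl (fun j _ => h3 j), Finset.sum_add_distrib,
      Finset.sum_ite_eq' Finset.univ a, Finset.sum_ite_eq' Finset.univ b] at h2
    simp only [Finset.mem_univ, if_true] at h2
    have h4 : conj β * W b b = conj β * α := by
      have h5 : conj β * α = -(conj α * β) := by
        rw [hα, hβ']
        simp only [_root_.map_mul, Complex.conj_ofReal, Complex.conj_I]
        ring
      rw [hWab] at h2
      linear_combination h2 - h5
    exact mul_left_cancel₀ hconjβne h4
  -- row b entries
  have hWba : W b a = β := by rw [hcol b, if_neg (Ne.symm hab), if_pos rfl]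
  have hw2 : Complex.normSq (Complex.exp (Complex.I * ζ)) = 1 := by
    have h := hw1
    rw [Complex.mul_conj] at h
    exact_mod_cast h
  have hWbj : ∀ j, W b j = if j = a then β else if j = b then α else 0 := by
    have h6 : ∑ j, W b j * conj (W b j) = 1 := by
      have h := congrFun (congrFun hUnit' b) b
      simpa [Matrix.mul_apply, Matrix.conjTranspose_apply, Matrix.one_apply] using h
    have h6' : ∑ j, (Complex.normSq (W b j) : ℂ) = 1 := by
      rw [← h6]
      exact Finset.sum_congr rfl fun j _ => (Complex.mul_conj (W b j)).symm
    have h7 : ∑ j, Complex.normSq (W b j) = 1 := by exact_mod_cast h6'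
    rw [← Finset.add_sum_erase _ _ (Finset.mem_univ a),
      ← Finset.add_sum_erase _ _ (Finset.mem_erase.mpr ⟨Ne.symm hab, Finset.mem_univ b⟩),
      hWba, hWbb] at h7
    have hαβsq : Complex.normSq β + Complex.normSq α = 1 := by
      rw [hα, hβ']
      simp only [Complex.normSq_mul, Complex.normSq_ofReal, Complex.normSq_I, hw2]
      nlinarith [Real.sin_sq_add_cos_sq γ]
    have hrest : ∑ j ∈ (Finset.univ.erase a).erase b, Complex.normSq (W b j) = 0 := by
      linarith
    have hzero := (Finset.sum_eq_zero_iff_of_nonneg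
      (fun j _ => Complex.normSq_nonneg (W b j))).mp hrest
    intro j
    by_cases hja : j = a
    · subst hja; rw [hWba, if_pos rfl]
    · by_cases hjb : j = b
      · subst hjb; rw [hWbb, if_neg hja, if_pos rfl]
      · rw [if_neg hja, if_neg hjb]
        exact Complex.normSq_eq_zero.mp (hzero j (Finset.mem_erase.mpr
          ⟨hjb, Finset.mem_erase.mpr ⟨hja, Finset.mem_univ j⟩⟩))
  funext j
  have hjb2 : W j b = W b j := by
    have h := congrFun (congrFun hWsym b) j
    rwa [Matrix.transpose_apply] at h
  show (W *ᵥ eC b) j = _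
  simp only [eC, Matrix.mulVec_single, MulOpposite.op_one, one_smul, Matrix.col_apply, mul_one, Pi.add_apply, Pi.smul_apply, Pi.single_apply,
    smul_eq_mul]
  rw [hjb2, hWbj j]
  by_cases hja : j = a
  · simp [hja, hab, Ne.symm hab]
  · by_cases hjb : j = b <;> simp [hja, hjb, hab, Ne.symm hab]
private lemma expI_add (x y : ℝ) :
    Complex.exp (Complex.I * ((x + y : ℝ) : ℂ)) =
      Complex.exp (Complex.I * (x : ℂ)) * ((Real.cos y : ℂ) + (Real.sin y : ℂ) * Complex.I) := by
  push_cast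
  rw [mul_add, Complex.exp_add]
  congr 1
  rw [mul_comm Complex.I ((y : ℝ) : ℂ), Complex.exp_mul_I, ← Complex.ofReal_cos,
    ← Complex.ofReal_sin]

theorem stmt8' {n : ℕ} (A : Matrix (Fin n) (Fin n) ℝ) (hA : A.IsSymm)
    (a b : Fin n) (hab : a ≠ b)
    (τ γ ζ : ℝ) (hirr : Irrational (γ / Real.pi))
    (hβ : Real.sin γ ≠ 0)
    (hrev : (qwalk A τ) *ᵥ eC a =
        (Complex.exp (Complex.I * ζ) * Real.cos γ) • eC a +
        (Complex.I * Complex.exp (Complex.I * ζ) * Real.sin γ) • eC b) :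
    ∀ ε : ℝ, 0 < ε → ∃ (t : ℝ) (ν : ℂ), ‖ν‖ = 1 ∧
      ‖(qwalk A t) *ᵥ eC a - ν • eC b‖ < ε := by
  intro ε hε
  set α : ℂ := Complex.exp (Complex.I * ζ) * Real.cos γ with hα
  set β : ℂ := Complex.I * Complex.exp (Complex.I * ζ) * Real.sin γ with hβ'
  have hWb := qwalk_eCb A hA a b hab τ γ ζ hβ hrev
  set W : Matrix (Fin n) (Fin n) ℂ := qwalk A τ with hWdef
  have hWu : W *ᵥ (eC a + eC b) = (α + β) • (eC a + eC b) := by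
    rw [Matrix.mulVec_add, hrev, hWb]
    simp only [smul_add, add_smul]
    abel
  have hWv : W *ᵥ (eC a - eC b) = (α - β) • (eC a - eC b) := by
    rw [Matrix.mulVec_sub, hrev, hWb]
    simp only [smul_sub, sub_smul]
    abel
  obtain ⟨k, hk⟩ := cos_small hirr (ε/2) (by linarith)
  set cc : ℝ := Real.cos ((k : ℝ) * γ) with hcc
  set ss : ℝ := Real.sin ((k : ℝ) * γ) with hss
  set P : ℂ := Complex.exp (Complex.I * (((k : ℝ) * ζ : ℝ) : ℂ)) with hP
  have h1 : (-(Complex.I * (((k : ℝ) * τ : ℝ) : ℂ))) • (A.map (fun x => (x : ℂ)))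
      = k • ((-(Complex.I * (τ : ℂ))) • (A.map fun x => (x : ℂ))) := by
    rw [← Nat.cast_smul_eq_nsmul ℂ k ((-(Complex.I * (τ : ℂ))) • (A.map fun x => (x : ℂ))),
      smul_smul]
    congr 1
    push_cast
    ring
  have hqk : qwalk A ((k : ℝ) * τ) = W ^ k := by
    show NormedSpace.exp ((-(Complex.I * (((k:ℝ) * τ : ℝ) : ℂ))) •
      A.map (fun x => (x : ℂ))) = W ^ k
    rw [h1, Matrix.exp_nsmul]
    rfl
  -- eigenvalue power computations
  have hplus : (α + β) ^ k = P * ((cc : ℂ) + (ss : ℂ) * Complex.I) := by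
    have e1 : α + β = Complex.exp (Complex.I * ((ζ + γ : ℝ) : ℂ)) := by
      rw [expI_add ζ γ, hα, hβ']
      push_cast [Complex.ofReal_sin, Complex.ofReal_cos]
      ring
    have e2 : Complex.I * (((ζ + γ : ℝ)) : ℂ) * k = Complex.I * (((k : ℝ) * (ζ + γ) : ℝ) : ℂ) := by
      push_cast; ring
    rw [e1, ← Complex.exp_nat_mul]
    rw [show ((k : ℂ)) * (Complex.I * ((ζ + γ : ℝ) : ℂ)) =
      Complex.I * (((k : ℝ) * ζ + (k : ℝ) * γ : ℝ) : ℂ) by push_cast; ring]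
    rw [expI_add ((k : ℝ) * ζ) ((k : ℝ) * γ)]
  have hminus : (α - β) ^ k = P * ((cc : ℂ) - (ss : ℂ) * Complex.I) := by
    have e1 : α - β = Complex.exp (Complex.I * ((ζ + (-γ) : ℝ) : ℂ)) := by
      rw [expI_add ζ (-γ), hα, hβ']
      push_cast [Real.cos_neg, Real.sin_neg, Complex.ofReal_sin, Complex.ofReal_cos]
      ring
    rw [e1, ← Complex.exp_nat_mul]
    rw [show ((k : ℂ)) * (Complex.I * ((ζ + (-γ) : ℝ) : ℂ)) =
      Complex.I * (((k : ℝ) * ζ + (k : ℝ) * (-γ) : ℝ) : ℂ) by push_cast; ring]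
    rw [expI_add ((k : ℝ) * ζ) ((k : ℝ) * (-γ))]
    rw [show (k : ℝ) * (-γ) = -((k : ℝ) * γ) by ring, Real.cos_neg, Real.sin_neg,
      Complex.ofReal_neg]
    ring
  have hea : eC a = (2⁻¹ : ℂ) • (eC a + eC b) + (2⁻¹ : ℂ) • (eC a - eC b) := by module
  have hWk : (W ^ k) *ᵥ eC a =
      ((2⁻¹ : ℂ) * (α + β) ^ k) • (eC a + eC b) +
      ((2⁻¹ : ℂ) * (α - β) ^ k) • (eC a - eC b) := by
    conv_lhs => rw [hea]
    rw [Matrix.mulVec_add, Matrix.mulVec_smul, Matrix.mulVec_smul,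
      pow_mulVec_eig W _ _ hWu k, pow_mulVec_eig W _ _ hWv k]
    module
  set ν : ℂ := (if 0 ≤ ss then 1 else -1) * (Complex.I * P) with hν
  have habsP : ‖P‖ = 1 := by
    rw [hP, Complex.norm_exp]
    simp
  have habsν : ‖ν‖ = 1 := by
    rw [hν]
    split_ifs <;> simp [norm_mul, habsP]
  refine ⟨(k : ℝ) * τ, ν, habsν, ?_⟩
  rw [hqk]
  have hfinal : (W ^ k) *ᵥ eC a - ν • eC b =
      (P * cc) • eC a + (P * ss * Complex.I - ν) • eC b := by
    rw [hWk, hplus, hminus]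
    module
  rw [hfinal]
  have hnea : ‖eC a‖ = 1 := by
    rw [eC, Pi.norm_single]
    simp
  have hneb : ‖eC b‖ = 1 := by
    rw [eC, Pi.norm_single]
    simp
  have hd : ‖P * ss * Complex.I - ν‖ ≤ |cc| := by
    have hss1 : ss ≤ 1 := Real.sin_le_one _
    have hss1' : -1 ≤ ss := Real.neg_one_le_sin _
    have htrig : ss ^ 2 + cc ^ 2 = 1 := Real.sin_sq_add_cos_sq _
    have hcc1 : |cc| ≤ 1 := Real.abs_cos_le_one _
    have heq : ‖P * ss * Complex.I - ν‖ = 1 - |ss| := by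
      rw [hν]
      by_cases h0 : 0 ≤ ss
      · rw [if_pos h0, one_mul]
        rw [show P * (ss : ℂ) * Complex.I - Complex.I * P = (((ss : ℝ) - 1 : ℝ) : ℂ) * (Complex.I * P) by push_cast; ring]
        rw [norm_mul, norm_mul, Complex.norm_real, Real.norm_eq_abs, Complex.norm_I, habsP,
          _root_.abs_of_nonpos (by linarith : ss - 1 ≤ 0), _root_.abs_of_nonneg h0]
        ring
      · rw [if_neg h0, neg_one_mul]
        rw [show P * (ss : ℂ) * Complex.I - -(Complex.I * P) = (((ss : ℝ) + 1 : ℝ) : ℂ) * (Complex.I * P) by push_cast; ring]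
        rw [norm_mul, norm_mul, Complex.norm_real, Real.norm_eq_abs, Complex.norm_I, habsP,
          _root_.abs_of_nonneg (by linarith : (0:ℝ) ≤ ss + 1), _root_.abs_of_nonpos (by linarith : ss ≤ 0)]
        ring
    rw [heq]
    nlinarith [_root_.sq_abs ss, _root_.sq_abs cc, abs_nonneg ss, abs_nonneg cc]
  calc ‖(P * cc) • eC a + (P * ss * Complex.I - ν) • eC b‖
      ≤ ‖(P * cc) • eC a‖ + ‖(P * ss * Complex.I - ν) • eC b‖ := norm_add_le _ _
    _ = ‖P * cc‖ * 1 + ‖P * ss * Complex.I - ν‖ * 1 := by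
        rw [norm_smul, norm_smul, hnea, hneb]
    _ ≤ |cc| + |cc| := by
        rw [norm_mul, Complex.norm_real, Real.norm_eq_abs, habsP, one_mul, mul_one, mul_one]
        linarith [hd]
    _ < ε := by
        have : |cc| < ε/2 := hk
        linarith

/-- If (e^{iζ}cos γ, i e^{iζ}sin γ)-revival occurs between strongly cospectral vertices
at time τ with γ/π irrational, then pretty good state transfer occurs from a to b. -/
theorem stmt8 {n m : ℕ} (A : Matrix (Fin n) (Fin n) ℝ) (hA : A.IsSymm)
    (θ : Fin m → ℝ) (E : Fin m → Matrix (Fin n) (Fin n) ℝ)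
    (hdecomp : A = ∑ r, θ r • E r)
    (hsum : ∑ r, E r = 1)
    (hsymm : ∀ r, (E r).IsSymm)
    (horth : ∀ r s, E r * E s = if r = s then E r else 0)
    (a b : Fin n) (hab : a ≠ b)
    (hsc : ∀ r, E r *ᵥ eR a = E r *ᵥ eR b ∨ E r *ᵥ eR a = -(E r *ᵥ eR b))
    (τ γ ζ : ℝ) (hirr : Irrational (γ / Real.pi))
    (hβ : Real.sin γ ≠ 0)
    (hrev : (qwalk A τ) *ᵥ eC a =
        (Complex.exp (Complex.I * ζ) * Real.cos γ) • eC a +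
        (Complex.I * Complex.exp (Complex.I * ζ) * Real.sin γ) • eC b) :
    ∀ ε : ℝ, 0 < ε → ∃ (t : ℝ) (ν : ℂ), ‖ν‖ = 1 ∧
      ‖(qwalk A t) *ᵥ eC a - ν • eC b‖ < ε :=
  stmt8' A hA a b hab τ γ ζ hirr hβ hrev
end

section
/- Let X be a graph periodic at vertex a at time τ (U_X(τ)e_a = γe_a, γ unimodular) with τ < π/2. Then in the Cartesian product X □ K₂, fractional revival occurs at time τ from vertex (a,u) to the pair {(a,u),(a,v)}: U_{X□K₂}(τ)e_{(a,u)} = γcos(τ) e_{(a,u)} − iγsin(τ) e_{(a,v)}, where u,v are the two vertices of K₂. -/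
open Matrix Complex BigOperators

open Kronecker

section aux

variable {m n : Type*} [Fintype m] [DecidableEq m] [Fintype n] [DecidableEq n]

lemma exp_reindex (e : m ≃ n) (M : Matrix m m ℂ) :
    NormedSpace.exp (Matrix.reindex e e M) = Matrix.reindex e e (NormedSpace.exp M) := by
  letI : SeminormedRing (Matrix m m ℂ) := Matrix.linftyOpSemiNormedRing
  letI : NormedRing (Matrix m m ℂ) := Matrix.linftyOpNormedRing
  letI : NormedAlgebra ℂ (Matrix m m ℂ) := Matrix.linftyOpNormedAlgebra
  letI : SeminormedRing (Matrix n n ℂ) := Matrix.linftyOpSemiNormedRing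
  letI : NormedRing (Matrix n n ℂ) := Matrix.linftyOpNormedRing
  letI : NormedAlgebra ℂ (Matrix n n ℂ) := Matrix.linftyOpNormedAlgebra
  letI : NormedAlgebra ℚ (Matrix m m ℂ) := Matrix.linftyOpNormedAlgebra
  letI : NormedAlgebra ℚ (Matrix n n ℂ) := Matrix.linftyOpNormedAlgebra
  have h := (NormedSpace.map_exp ((Matrix.reindexAlgEquiv ℂ ℂ e : Matrix m m ℂ ≃ₐ[ℂ] Matrix n n ℂ))
    (continuous_id.matrix_reindex e e) M).symm
  simp only [Matrix.reindexAlgEquiv_apply] at h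
  exact h

lemma kron_one_eq_blockDiagonal (X : Matrix m m ℂ) :
    X ⊗ₖ (1 : Matrix n n ℂ) = Matrix.blockDiagonal (fun _ : n => X) := by
  ext ⟨i, k⟩ ⟨j, l⟩
  simp [Matrix.kroneckerMap_apply, Matrix.blockDiagonal_apply, Matrix.one_apply, mul_ite]

lemma one_kron_eq (X : Matrix n n ℂ) :
    (1 : Matrix m m ℂ) ⊗ₖ X =
      Matrix.reindex (Equiv.prodComm n m) (Equiv.prodComm n m)
        (Matrix.blockDiagonal (fun _ : m => X)) := by
  ext ⟨i, k⟩ ⟨j, l⟩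
  simp [Matrix.kroneckerMap_apply, Matrix.blockDiagonal_apply, Matrix.one_apply, ite_mul]

lemma exp_const_pi {ι : Type*} [Finite ι] (X : Matrix m m ℂ) :
    NormedSpace.exp (fun _ : ι => X) = fun _ : ι => NormedSpace.exp X := by
  letI : SeminormedRing (Matrix m m ℂ) := Matrix.linftyOpSemiNormedRing
  letI : NormedRing (Matrix m m ℂ) := Matrix.linftyOpNormedRing
  letI : NormedAlgebra ℂ (Matrix m m ℂ) := Matrix.linftyOpNormedAlgebra
  letI : NormedAlgebra ℚ (Matrix m m ℂ) := Matrix.linftyOpNormedAlgebra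
  exact Pi.exp_def _

lemma exp_kron_one (X : Matrix m m ℂ) :
    NormedSpace.exp (X ⊗ₖ (1 : Matrix n n ℂ)) = (NormedSpace.exp X) ⊗ₖ 1 := by
  rw [kron_one_eq_blockDiagonal, Matrix.exp_blockDiagonal, exp_const_pi,
    kron_one_eq_blockDiagonal]

lemma exp_one_kron (X : Matrix n n ℂ) :
    NormedSpace.exp ((1 : Matrix m m ℂ) ⊗ₖ X) = (1 : Matrix m m ℂ) ⊗ₖ (NormedSpace.exp X) := by
  rw [one_kron_eq, exp_reindex, Matrix.exp_blockDiagonal, exp_const_pi, one_kron_eq]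

end aux

lemma exp_K2 (τ : ℝ) :
    NormedSpace.exp ((-(Complex.I * (τ : ℂ))) • (!![0, 1; 1, 0] : Matrix (Fin 2) (Fin 2) ℂ)) =
      !![(Real.cos τ : ℂ), -(Complex.I * Real.sin τ);
         -(Complex.I * Real.sin τ), (Real.cos τ : ℂ)] := by
  set c : ℂ := -(Complex.I * (τ : ℂ)) with hc
  set P : Matrix (Fin 2) (Fin 2) ℂ := !![1, 1; 1, -1] with hP
  set Q : Matrix (Fin 2) (Fin 2) ℂ := !![1/2, 1/2; 1/2, -1/2] with hQ
  have hPQ : P * Q = 1 := by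
    rw [hP, hQ, Matrix.mul_fin_two]
    norm_num
    exact Matrix.one_fin_two.symm
  have hQP : Q * P = 1 := by
    rw [hP, hQ, Matrix.mul_fin_two]
    norm_num
    exact Matrix.one_fin_two.symm
  have hDmat : (Matrix.diagonal ![c, -c] : Matrix (Fin 2) (Fin 2) ℂ) = !![c, 0; 0, -c] := by
    ext i j
    fin_cases i <;> fin_cases j <;> simp [Matrix.diagonal_apply]
  have hconj : c • (!![0, 1; 1, 0] : Matrix (Fin 2) (Fin 2) ℂ)
      = P * Matrix.diagonal ![c, -c] * Q := by
    rw [hDmat, hP, hQ, Matrix.mul_fin_two, Matrix.mul_fin_two]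
    ext i j
    fin_cases i <;> fin_cases j <;> simp <;> ring
  have key : NormedSpace.exp (P * Matrix.diagonal ![c, -c] * Q)
      = P * NormedSpace.exp (Matrix.diagonal ![c, -c]) * Q :=
    Matrix.exp_units_conj (⟨P, Q, hPQ, hQP⟩ : (Matrix (Fin 2) (Fin 2) ℂ)ˣ) _
  have hexp : NormedSpace.exp (![c, -c]) = ![Complex.exp c, Complex.exp (-c)] := by
    funext i
    fin_cases i <;> simp [Pi.coe_exp, ← Complex.exp_eq_exp_ℂ]
  have h1 : Complex.exp c = Real.cos τ - Complex.I * Real.sin τ := by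
    rw [hc, show -(Complex.I * (τ : ℂ)) = (-τ : ℂ) * Complex.I by ring, Complex.exp_mul_I]
    rw [Complex.cos_neg, Complex.sin_neg, ← Complex.ofReal_cos, ← Complex.ofReal_sin]
    ring
  have h2 : Complex.exp (-c) = Real.cos τ + Complex.I * Real.sin τ := by
    rw [hc, neg_neg, show Complex.I * (τ : ℂ) = (τ : ℂ) * Complex.I by ring, Complex.exp_mul_I]
    rw [← Complex.ofReal_cos, ← Complex.ofReal_sin]
    ring
  rw [hconj, key, Matrix.exp_diagonal, hexp, h1, h2]
  have hDmat2 : (Matrix.diagonal ![(Real.cos τ - Complex.I * Real.sin τ : ℂ),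
      (Real.cos τ + Complex.I * Real.sin τ : ℂ)] : Matrix (Fin 2) (Fin 2) ℂ)
      = !![(Real.cos τ - Complex.I * Real.sin τ : ℂ), 0;
           0, (Real.cos τ + Complex.I * Real.sin τ : ℂ)] := by
    ext i j
    fin_cases i <;> fin_cases j <;> simp [Matrix.diagonal_apply]
  rw [hDmat2, hP, hQ, Matrix.mul_fin_two, Matrix.mul_fin_two]
  ext i j
  fin_cases i <;> fin_cases j <;> simp <;> ring

/-- If X is periodic at a at time τ < π/2, then X □ K₂ has fractional revival at time τ
from (a,u) to the pair {(a,u),(a,v)}: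
U(τ) e_{(a,u)} = γ cos τ · e_{(a,u)} − iγ sin τ · e_{(a,v)}. -/
theorem stmt9 {n : ℕ} (A : Matrix (Fin n) (Fin n) ℝ) (hA : A.IsSymm)
    (a : Fin n) (τ : ℝ) (hτ0 : 0 < τ) (hτ : τ < Real.pi / 2)
    (γ : ℂ) (hγ : ‖γ‖ = 1)
    (hper : (qwalk A τ) *ᵥ eC a = γ • eC a) :
    (qwalk (A ⊗ₖ (1 : Matrix (Fin 2) (Fin 2) ℝ) +
        (1 : Matrix (Fin n) (Fin n) ℝ) ⊗ₖ !![0, 1; 1, 0]) τ) *ᵥ eC (a, (0 : Fin 2)) =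
      (γ * Real.cos τ) • eC (a, (0 : Fin 2)) +
      (-(Complex.I) * γ * Real.sin τ) • eC (a, (1 : Fin 2)) := by
  set c : ℂ := -(Complex.I * (τ : ℂ)) with hc
  set A' : Matrix (Fin n) (Fin n) ℂ := A.map (fun x => (x : ℂ)) with hA'
  set B' : Matrix (Fin 2) (Fin 2) ℂ := !![0, 1; 1, 0] with hB'
  -- the real kronecker sum maps to the complex kronecker sum
  have hmap : ((A ⊗ₖ (1 : Matrix (Fin 2) (Fin 2) ℝ) +
      (1 : Matrix (Fin n) (Fin n) ℝ) ⊗ₖ !![0, 1; 1, 0]).map (fun x => (x : ℂ)))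
      = A' ⊗ₖ (1 : Matrix (Fin 2) (Fin 2) ℂ) + (1 : Matrix (Fin n) (Fin n) ℂ) ⊗ₖ B' := by
    ext ⟨i, k⟩ ⟨j, l⟩
    fin_cases k <;> fin_cases l <;>
      simp [hA', hB', Matrix.kroneckerMap_apply, Matrix.map_apply, Matrix.one_apply, apply_ite] <;>
      push_cast <;> ring_nf <;> simp
  have hcomm : Commute (c • (A' ⊗ₖ (1 : Matrix (Fin 2) (Fin 2) ℂ)))
      (c • ((1 : Matrix (Fin n) (Fin n) ℂ) ⊗ₖ B')) := by
    apply Commute.smul_left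
    apply Commute.smul_right
    unfold Commute SemiconjBy
    rw [← Matrix.mul_kronecker_mul, ← Matrix.mul_kronecker_mul, one_mul, mul_one, one_mul, mul_one]
  have hfact : qwalk (A ⊗ₖ (1 : Matrix (Fin 2) (Fin 2) ℝ) +
      (1 : Matrix (Fin n) (Fin n) ℝ) ⊗ₖ !![0, 1; 1, 0]) τ
      = (NormedSpace.exp (c • A')) ⊗ₖ (NormedSpace.exp (c • B')) := by
    rw [qwalk, hmap, ← hc, smul_add, Matrix.exp_add_of_commute _ _ hcomm]
    rw [show c • (A' ⊗ₖ (1 : Matrix (Fin 2) (Fin 2) ℂ)) = (c • A') ⊗ₖ 1 from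
      (Matrix.smul_kronecker c A' 1).symm]
    rw [show c • ((1 : Matrix (Fin n) (Fin n) ℂ) ⊗ₖ B') = (1 : Matrix (Fin n) (Fin n) ℂ) ⊗ₖ (c • B')
      from (Matrix.kronecker_smul c 1 B').symm]
    rw [exp_kron_one, exp_one_kron, ← Matrix.mul_kronecker_mul, mul_one, one_mul]
  have hN : NormedSpace.exp (c • B') =
      !![(Real.cos τ : ℂ), -(Complex.I * Real.sin τ);
         -(Complex.I * Real.sin τ), (Real.cos τ : ℂ)] := exp_K2 τ
  have hM : ∀ i, (NormedSpace.exp (c • A')) i a = γ * (Pi.single a 1 : Fin n → ℂ) i := by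
    intro i
    have := congrFun hper i
    rw [qwalk, ← hA', ← hc] at this
    simpa [eC, Matrix.mulVec_single, Pi.smul_apply, smul_eq_mul] using this
  rw [hfact]
  funext ⟨i, j⟩
  have hmv : ((NormedSpace.exp (c • A')) ⊗ₖ (NormedSpace.exp (c • B')) *ᵥ
      eC (a, (0 : Fin 2))) (i, j)
      = (NormedSpace.exp (c • A')) i a * (NormedSpace.exp (c • B')) j 0 := by
    rw [Matrix.mulVec]
    rw [show eC (a, (0 : Fin 2)) = Pi.single (a, (0 : Fin 2)) (1 : ℂ) from rfl]
    rw [dotProduct]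
    rw [Finset.sum_eq_single (a, (0 : Fin 2))]
    · simp [Matrix.kroneckerMap_apply]
    · intro b _ hb
      simp [Pi.single_apply, hb.symm]
    · simp
  rw [hmv, hM, hN]
  fin_cases j <;>
    simp [eC, Pi.single_apply, Prod.ext_iff] <;>
    by_cases hia : i = a <;> simp [hia] <;> ring
end

section
/- Let X have perfect state transfer from a to b at time τ < π/2, and let Y be a graph on the same vertex set whose adjacency matrix commutes with that of X and in which (a,b) is an isolated edge (A(Y)e_b = e_a and A(Y)e_a = e_b). Then U_{X∪Y}(τ)e_a = γ(cos(τ)e_b − i sin(τ)e_a) for some unimodular γ; in particular fractional revival occurs between a and b in X ∪ Y. -/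
open Matrix Complex BigOperators

lemma exp_mulVec_eigen {N : ℕ} (M : Matrix (Fin N) (Fin N) ℂ) (v : Fin N → ℂ) (μ : ℂ)
    (h : M *ᵥ v = μ • v) :
    (NormedSpace.exp M) *ᵥ v = Complex.exp μ • v := by
  letI : NormedRing (Matrix (Fin N) (Fin N) ℂ) := Matrix.linftyOpNormedRing
  letI : NormedAlgebra ℂ (Matrix (Fin N) (Fin N) ℂ) := Matrix.linftyOpNormedAlgebra
  have hpow : ∀ k : ℕ, M ^ k *ᵥ v = μ ^ k • v := by
    intro k
    induction k with
    | zero => simp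
    | succ k ih =>
      rw [pow_succ, ← Matrix.mulVec_mulVec, h, Matrix.mulVec_smul, ih, smul_smul, pow_succ]
      ring_nf
  have hsum : Summable (fun k : ℕ => ((Nat.factorial k : ℂ))⁻¹ • M ^ k) :=
    NormedSpace.expSeries_summable' (𝕂 := ℂ) M
  let L : Matrix (Fin N) (Fin N) ℂ →ₗ[ℂ] (Fin N → ℂ) :=
    { toFun := fun X => X *ᵥ v
      map_add' := fun X Y => Matrix.add_mulVec X Y v
      map_smul' := fun c X => Matrix.smul_mulVec c X v }
  have hcont : Continuous L := L.continuous_of_finiteDimensional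
  have hmap : L (∑' k : ℕ, ((Nat.factorial k : ℂ))⁻¹ • M ^ k)
      = ∑' k : ℕ, L (((Nat.factorial k : ℂ))⁻¹ • M ^ k) :=
    ((hsum.hasSum.mapL ⟨L, hcont⟩).tsum_eq).symm
  have hL : ∀ k : ℕ, L (((Nat.factorial k : ℂ))⁻¹ • M ^ k) = (((Nat.factorial k : ℂ))⁻¹ • μ ^ k) • v := by
    intro k
    simp only [L, LinearMap.coe_mk, AddHom.coe_mk, Matrix.smul_mulVec, hpow, smul_smul]
    rw [smul_eq_mul]
  have hμ : Complex.exp μ = ∑' k : ℕ, ((Nat.factorial k : ℂ))⁻¹ • μ ^ k := by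
    rw [Complex.exp_eq_exp_ℂ, NormedSpace.exp_eq_tsum ℂ]
  calc (NormedSpace.exp M) *ᵥ v = L (∑' k : ℕ, ((Nat.factorial k : ℂ))⁻¹ • M ^ k) := by
        rw [NormedSpace.exp_eq_tsum ℂ]; rfl
    _ = ∑' k : ℕ, (((Nat.factorial k : ℂ))⁻¹ • μ ^ k) • v := by rw [hmap]; simp_rw [hL]
    _ = (∑' k : ℕ, ((Nat.factorial k : ℂ))⁻¹ • μ ^ k) • v :=
        Summable.tsum_smul_const (NormedSpace.expSeries_summable' (𝕂 := ℂ) μ) v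
    _ = Complex.exp μ • v := by rw [hμ]

/-- Perfect state transfer in X at time τ < π/2 plus a commuting graph Y in which (a,b)
is an isolated edge yields fractional revival between a and b in X ∪ Y. -/
theorem stmt10 {n : ℕ} (A B : Matrix (Fin n) (Fin n) ℝ)
    (hA : A.IsSymm) (hB : B.IsSymm) (hcomm : A * B = B * A)
    (a b : Fin n) (hab : a ≠ b)
    (hBa : B *ᵥ eR a = eR b) (hBb : B *ᵥ eR b = eR a)
    (τ : ℝ) (hτ0 : 0 < τ) (hτ : τ < Real.pi / 2)
    (γ : ℂ) (hγ : ‖γ‖ = 1)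
    (hpst : (qwalk A τ) *ᵥ eC a = γ • eC b) :
    (qwalk (A + B) τ) *ᵥ eC a =
      (γ * Real.cos τ) • eC b + (-(Complex.I) * γ * Real.sin τ) • eC a ∧
    ∃ α β : ℂ, β ≠ 0 ∧ ‖α‖ ^ 2 + ‖β‖ ^ 2 = 1 ∧
      (qwalk (A + B) τ) *ᵥ eC a = α • eC a + β • eC b := by
  classical
  set c : ℂ := -(Complex.I * (τ : ℂ)) with hc
  set Ac : Matrix (Fin n) (Fin n) ℂ := A.map (fun x => (x : ℂ)) with hAc
  set Bc : Matrix (Fin n) (Fin n) ℂ := B.map (fun x => (x : ℂ)) with hBc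
  -- complexified action of B
  have hBvec : ∀ (x y : Fin n), B *ᵥ eR x = eR y → Bc *ᵥ eC x = eC y := by
    intro x y hxy
    funext i
    have h1 := congrFun hxy i
    simp only [eR, Matrix.mulVec_single_one, Matrix.col_apply] at h1
    simp only [eC, Matrix.mulVec_single_one, Matrix.col_apply, hBc, Matrix.map_apply, h1, Pi.single_apply]
    split_ifs <;> simp
  have hBa' : Bc *ᵥ eC a = eC b := hBvec a b hBa
  have hBb' : Bc *ᵥ eC b = eC a := hBvec b a hBb
  -- eigenvectors of c • Bc
  have hplus : (c • Bc) *ᵥ (eC a + eC b) = c • (eC a + eC b) := by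
    rw [Matrix.smul_mulVec, Matrix.mulVec_add, hBa', hBb', add_comm]
  have hminus : (c • Bc) *ᵥ (eC a - eC b) = (-c) • (eC a - eC b) := by
    rw [Matrix.smul_mulVec, Matrix.mulVec_sub, hBa', hBb']
    rw [← neg_sub (eC a) (eC b), smul_neg, ← neg_smul]
  have heplus := exp_mulVec_eigen (c • Bc) (eC a + eC b) c hplus
  have heminus := exp_mulVec_eigen (c • Bc) (eC a - eC b) (-c) hminus
  -- Euler
  have hec : Complex.exp c = Real.cos τ - Complex.I * Real.sin τ := by
    have : c = (-(τ : ℂ)) * Complex.I := by rw [hc]; ring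
    rw [this, Complex.exp_mul_I, Complex.cos_neg, Complex.sin_neg,
      Complex.ofReal_cos, Complex.ofReal_sin]
    ring
  have henc : Complex.exp (-c) = Real.cos τ + Complex.I * Real.sin τ := by
    have : -c = (τ : ℂ) * Complex.I := by rw [hc]; ring
    rw [this, Complex.exp_mul_I, Complex.ofReal_cos, Complex.ofReal_sin]
    ring
  -- action of exp (c • Bc) on eC b
  have hkey : (NormedSpace.exp (c • Bc)) *ᵥ eC b =
      (-(Complex.I) * Real.sin τ) • eC a + (Real.cos τ : ℂ) • eC b := by
    have hb : eC b = (2⁻¹ : ℂ) • ((eC a + eC b) - (eC a - eC b)) := by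
      rw [smul_sub, smul_add, smul_sub]
      funext i; simp; ring
    rw [hb, Matrix.mulVec_smul, Matrix.mulVec_sub, heplus, heminus, hec, henc]
    module
  -- splitting of the exponential
  have hmapadd : (A + B).map (fun x => (x : ℂ)) = Ac + Bc := by
    ext i j; simp [Matrix.map_apply, hAc, hBc]
  have hcommC : Commute (c • Ac) (c • Bc) := by
    have : Ac * Bc = Bc * Ac := by
      have h1 : ∀ (X Y : Matrix (Fin n) (Fin n) ℝ),
          (X * Y).map (fun x => (x : ℂ)) = X.map (fun x => (x : ℂ)) * Y.map (fun x => (x : ℂ)) := by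
        intro X Y; ext i j
        simp [Matrix.mul_apply, Matrix.map_apply]
      rw [hAc, hBc, ← h1, ← h1, hcomm]
    exact Commute.smul_left (Commute.smul_right this c) c
  have hsplit : qwalk (A + B) τ = NormedSpace.exp (c • Bc) * NormedSpace.exp (c • Ac) := by
    rw [qwalk, hmapadd, ← hc, smul_add, add_comm]
    exact Matrix.exp_add_of_commute _ _ hcommC.symm
  have hqA : (NormedSpace.exp (c • Ac)) *ᵥ eC a = γ • eC b := hpst
  have hmain : (qwalk (A + B) τ) *ᵥ eC a =
      (γ * Real.cos τ) • eC b + (-(Complex.I) * γ * Real.sin τ) • eC a := by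
    rw [hsplit, ← Matrix.mulVec_mulVec, hqA, Matrix.mulVec_smul, hkey]
    rw [smul_add, smul_smul, smul_smul]
    rw [show γ * (-(Complex.I) * Real.sin τ) = -(Complex.I) * γ * Real.sin τ by ring,
      show γ * (Real.cos τ : ℂ) = γ * Real.cos τ from rfl]
    exact add_comm _ _
  refine ⟨hmain, -(Complex.I) * γ * Real.sin τ, γ * Real.cos τ, ?_, ?_, ?_⟩
  · have hγ0 : γ ≠ 0 := by
      intro h; rw [h] at hγ; simp at hγ
    have hcos : Real.cos τ ≠ 0 := by
      have := Real.cos_pos_of_mem_Ioo (x := τ) ⟨by linarith [Real.pi_pos], hτ⟩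
      linarith
    exact mul_ne_zero hγ0 (by exact_mod_cast hcos)
  · simp only [norm_mul, norm_neg, Complex.norm_I, Complex.norm_real, Real.norm_eq_abs, hγ,
      one_mul, mul_one]
    rw [_root_.sq_abs (Real.sin τ), _root_.sq_abs (Real.cos τ), Real.sin_sq_add_cos_sq]
  · rw [hmain, add_comm]
end

section
/- If fractional revival occurs from a to b at time τ in a graph X, then every automorphism of X fixing a also fixes b; hence Aut_X(a) = Aut_X(b). -/
open Matrix Complex BigOperators

/-- If fractional revival occurs from a to b in a graph X, then every automorphism
fixing a also fixes b (and conversely), i.e. Aut_X(a) = Aut_X(b). -/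
theorem stmt13 {n : ℕ} (G : SimpleGraph (Fin n)) [DecidableRel G.Adj]
    (a b : Fin n) (hab : a ≠ b) (τ : ℝ) (α β : ℂ) (hβ : β ≠ 0)
    (hnorm : ‖α‖ ^ 2 + ‖β‖ ^ 2 = 1)
    (hrev : (qwalk (G.adjMatrix ℝ) τ) *ᵥ eC a = α • eC a + β • eC b) :
    ∀ σ : G ≃g G, (σ a = a ↔ σ b = b) := by
  intro σ
  set A' : Matrix (Fin n) (Fin n) ℂ := (G.adjMatrix ℝ).map (fun x => (x : ℂ)) with hA'def
  have hA'eq : A' = G.adjMatrix ℂ := by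
    ext i j
    simp [hA'def, SimpleGraph.adjMatrix_apply, apply_ite]
  set M : Matrix (Fin n) (Fin n) ℂ := (-(Complex.I * (τ : ℂ))) • A' with hMdef
  set U : Matrix (Fin n) (Fin n) ℂ := qwalk (G.adjMatrix ℝ) τ with hUdef
  have hUexp : U = NormedSpace.exp M := rfl
  -- permutation matrix of σ
  set P : Matrix (Fin n) (Fin n) ℂ := Matrix.of (fun i j => if σ j = i then 1 else 0) with hPdef
  -- P acts on basis vectors
  have hPe : ∀ c : Fin n, P *ᵥ eC c = eC (σ c) := by
    intro c
    ext i
    simp only [hPdef, mulVec, dotProduct, of_apply, eC, Pi.single_apply]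
    rw [Finset.sum_eq_single c]
    · rcases eq_or_ne (σ c) i with h | h
      · simp [h]
      · simp [h, Ne.symm h]
    · intro k _ hk; simp [hk]
    · simp
  -- entries symmetry under σ
  have hAdj : ∀ i j, A' (σ.toEquiv.symm i) j = A' i (σ j) := by
    intro i j
    rw [hA'eq]
    simp only [SimpleGraph.adjMatrix_apply]
    congr 1
    rw [eq_iff_iff]
    have h1 : σ (σ.toEquiv.symm i) = i := σ.toEquiv.apply_symm_apply i
    constructor
    · intro h
      have := σ.map_adj_iff.mpr h
      rwa [h1] at this
    · intro h
      exact σ.map_adj_iff.mp (h1.symm ▸ h)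
  -- P commutes with A'
  have hComm : Commute P A' := by
    show P * A' = A' * P
    ext i j
    have hL : (P * A') i j = A' (σ.toEquiv.symm i) j := by
      simp only [mul_apply, hPdef, of_apply]
      rw [Finset.sum_eq_single (σ.toEquiv.symm i)]
      · have hc : σ (σ.toEquiv.symm i) = i := σ.toEquiv.apply_symm_apply i
        rw [if_pos hc, one_mul]
      · intro k _ hk
        rw [if_neg, zero_mul]
        intro h
        exact hk (by rw [← h]; exact (σ.toEquiv.symm_apply_apply k).symm)
      · simp
    have hR : (A' * P) i j = A' i (σ j) := by
      simp only [mul_apply, hPdef, of_apply]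
      rw [Finset.sum_eq_single (σ j)]
      · rw [if_pos rfl, mul_one]
      · intro k _ hk
        rw [if_neg (fun h => hk h.symm), mul_zero]
      · simp
    rw [hL, hR, hAdj]
  have hCommM : Commute P M := hComm.smul_right _
  have hCommU : Commute P U := by rw [hUexp]; exact hCommM.exp_right
  -- unitarity : Uᴴ * U = 1
  have hMH : Mᴴ = -M := by
    rw [hMdef, conjTranspose_smul]
    have hA'H : A'ᴴ = A' := by
      rw [hA'eq]
      ext i j
      simp [conjTranspose_apply, SimpleGraph.adjMatrix_apply, apply_ite, G.adj_comm i j]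
    rw [hA'H, ← neg_smul]
    congr 1
    simp [Complex.star_def]
  have hUnit : Uᴴ * U = 1 := by
    rw [hUexp, ← Matrix.exp_conjTranspose, hMH,
      ← Matrix.exp_add_of_commute (-M) M ((Commute.refl M).neg_left),
      neg_add_cancel, NormedSpace.exp_zero]
  -- inner products preserved by U
  have hIP : ∀ v : Fin n → ℂ, star (U *ᵥ v) ⬝ᵥ (U *ᵥ v) = star v ⬝ᵥ v := by
    intro v
    rw [Matrix.star_mulVec, Matrix.dotProduct_mulVec, Matrix.vecMul_vecMul, hUnit,
      Matrix.vecMul_one]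
  constructor
  · -- σ a = a → σ b = b
    intro ha
    have h1 : P *ᵥ (U *ᵥ eC a) = U *ᵥ (P *ᵥ eC a) := by
      rw [Matrix.mulVec_mulVec, Matrix.mulVec_mulVec, hCommU.eq]
    rw [hPe, ha, hrev, Matrix.mulVec_add, Matrix.mulVec_smul, Matrix.mulVec_smul,
      hPe, hPe, ha] at h1
    have h2 : β • eC (σ b) = β • eC b := add_left_cancel h1
    by_contra hb
    have h3 := congrFun h2 b
    simp only [Pi.smul_apply, eC, Pi.single_apply, smul_eq_mul] at h3
    rw [if_neg (fun h => hb h.symm)] at h3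
    simp at h3
    exact hβ h3.symm
  · -- σ b = b → σ a = a
    intro hb
    have h1 : P *ᵥ (U *ᵥ eC a) = U *ᵥ (P *ᵥ eC a) := by
      rw [Matrix.mulVec_mulVec, Matrix.mulVec_mulVec, hCommU.eq]
    rw [hPe, hrev, Matrix.mulVec_add, Matrix.mulVec_smul, Matrix.mulVec_smul,
      hPe, hPe, hb] at h1
    -- h1 : α • eC (σ a) + β • eC b = U *ᵥ eC (σ a)
    by_contra ha
    have hwne : σ a ≠ a := fun h => ha h
    set w : Fin n → ℂ := eC a - eC (σ a) with hwdef
    have hw : U *ᵥ w = α • w := by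
      rw [hwdef, Matrix.mulVec_sub, hrev, ← h1, smul_sub]
      abel
    have hww : star w ⬝ᵥ w = 2 := by
      have hterm : ∀ i, star (w i) * w i =
          (if i = a then 1 else 0) + (if i = σ a then 1 else 0) := by
        intro i
        rcases eq_or_ne i a with h1' | h1' <;> rcases eq_or_ne i (σ a) with h2' | h2'
        · exact absurd (h2' ▸ h1' ▸ rfl : σ a = a) hwne
        · simp [hwdef, eC, Pi.single_apply, h1', h2', hwne, Ne.symm hwne]
        · simp [hwdef, eC, Pi.single_apply, h1', h2', hwne, Ne.symm hwne]
        · simp [hwdef, eC, Pi.single_apply, h1', h2', hwne, Ne.symm hwne]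
      calc star w ⬝ᵥ w = ∑ i, star (w i) * w i := rfl
        _ = ∑ i, ((if i = a then (1:ℂ) else 0) + (if i = σ a then 1 else 0)) := by
            exact Finset.sum_congr rfl (fun i _ => hterm i)
        _ = 2 := by
            rw [Finset.sum_add_distrib, Finset.sum_ite_eq' Finset.univ a (fun _ => (1:ℂ)),
              Finset.sum_ite_eq' Finset.univ (σ a) (fun _ => (1:ℂ))]
            simp
            norm_num
    have key : α * ((starRingEnd ℂ) α * (star w ⬝ᵥ w)) = star w ⬝ᵥ w := by
      have h4 := hIP w
      rw [hw] at h4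
      simpa [star_smul, smul_dotProduct, dotProduct_smul,
        Complex.star_def] using h4
    rw [hww] at key
    have habs : Complex.normSq α = 1 := by
      have h5 : ((Complex.normSq α : ℂ)) = 1 := by
        have h6 : (starRingEnd ℂ) α * α = 1 := by
          have h7 : ((starRingEnd ℂ) α * α) * 2 = 1 * 2 := by rw [one_mul]; linear_combination key
          exact mul_right_cancel₀ two_ne_zero h7
        rw [← h6, mul_comm]
        exact (Complex.mul_conj α).symm
      exact_mod_cast h5
    have hα : ‖α‖ ^ 2 = 1 := by rw [Complex.sq_norm]; exact habs
    rw [hα] at hnorm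
    have hb0 : ‖β‖ = 0 := by nlinarith [norm_nonneg β]
    exact hβ (norm_eq_zero.mp hb0)
end

section
/- Suppose (α,β)-revival occurs at time τ between vertices a and b lying in the same part of the bipartition of a connected bipartite graph X. Then X is periodic at both a and b at time 2τ: U(2τ)e_a = ±e_a and U(2τ)e_b = ±e_b. -/
open Matrix Complex BigOperators

private lemma exp_entry' {m : Type*} [Fintype m] [DecidableEq m] (M : Matrix m m ℂ) (i j : m) :
    (NormedSpace.exp M) i j = ∑' k : ℕ, ((Nat.factorial k : ℂ)⁻¹) • (M ^ k) i j := by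
  letI : SeminormedRing (Matrix m m ℂ) := Matrix.linftyOpSemiNormedRing
  letI : NormedRing (Matrix m m ℂ) := Matrix.linftyOpNormedRing
  letI : NormedAlgebra ℂ (Matrix m m ℂ) := Matrix.linftyOpNormedAlgebra
  have hs : Summable fun k : ℕ => (Nat.factorial k : ℂ)⁻¹ • M ^ k :=
    NormedSpace.expSeries_summable' (𝕂 := ℂ) M
  have h1 : NormedSpace.exp M = ∑' k : ℕ, (Nat.factorial k : ℂ)⁻¹ • M ^ k := by
    rw [NormedSpace.exp_eq_tsum (𝕂 := ℂ)]
  rw [h1]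
  exact (congrFun (tsum_apply hs) j).trans (tsum_apply ((Pi.summable).mp hs i))

private lemma adj_pow_zero' {n : ℕ} (G : SimpleGraph (Fin n)) [DecidableRel G.Adj]
    (part : Fin n → Bool) (hbip : ∀ i j, G.Adj i j → part i ≠ part j)
    (k : ℕ) (i j : Fin n) (h : ¬ (part i = part j ↔ Even k)) :
    ((G.adjMatrix ℝ) ^ k) i j = 0 := by
  induction k generalizing i j with
  | zero =>
    have hij : i ≠ j := by rintro rfl; simp at h
    simp [pow_zero, Matrix.one_apply, hij]
  | succ k ih =>
    rw [pow_succ, Matrix.mul_apply]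
    apply Finset.sum_eq_zero
    intro l _
    by_cases hadj : G.Adj l j
    · have hl := hbip l j hadj
      have hik : ¬ (part i = part l ↔ Even k) := by
        rw [Nat.even_add_one] at h
        cases hpi : part i <;> cases hpl : part l <;> cases hpj : part j <;> simp_all
      rw [ih i l hik, zero_mul]
    · simp [SimpleGraph.adjMatrix_apply, hadj]

private lemma pow_map' {n : ℕ} (A : Matrix (Fin n) (Fin n) ℝ) (k : ℕ) :
    (A.map (fun x => (x : ℂ))) ^ k = (A ^ k).map (fun x => (x : ℂ)) := by
  have h : A.map (fun x => (x : ℂ)) = (algebraMap ℝ ℂ).mapMatrix A := rfl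
  rw [h, ← map_pow]
  rfl

private lemma qwalk_real' {n : ℕ} (G : SimpleGraph (Fin n)) [DecidableRel G.Adj]
    (part : Fin n → Bool) (hbip : ∀ i j, G.Adj i j → part i ≠ part j)
    (t : ℝ) (i j : Fin n) (hp : part i = part j) :
    (starRingEnd ℂ) (qwalk (G.adjMatrix ℝ) t i j) = qwalk (G.adjMatrix ℝ) t i j := by
  rw [qwalk, exp_entry']
  have hse : ∀ z : ℂ, (starRingEnd ℂ) z = star z := fun z => rfl
  rw [hse, tsum_star]
  apply tsum_congr
  intro k
  rw [smul_pow, Matrix.smul_apply, pow_map', Matrix.map_apply]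
  rcases Nat.even_or_odd k with hk | hk
  · have hc : star ((-(Complex.I * (t:ℂ))) ^ k) = (-(Complex.I * (t:ℂ))) ^ k := by
      rw [star_pow]
      have h2 : star (-(Complex.I * (t:ℂ))) = -(-(Complex.I * (t:ℂ))) := by
        simp [Complex.star_def]
      rw [h2, hk.neg_pow]
    simp [star_smul, star_mul', hc, Complex.star_def, Complex.conj_ofReal, map_inv₀]
  · have h0 : ((G.adjMatrix ℝ) ^ k) i j = 0 := by
      apply adj_pow_zero' G part hbip
      simp [hp, Nat.not_even_iff_odd.mpr hk]
    simp [h0]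

/-- Fractional revival between two vertices in the same part of the bipartition of a
connected bipartite graph implies periodicity at both vertices at time 2τ, with
U(2τ)e_a = ±e_a and U(2τ)e_b = ±e_b (same sign). -/
theorem stmt14 {n : ℕ} (G : SimpleGraph (Fin n)) [DecidableRel G.Adj]
    (hconn : G.Connected)
    (part : Fin n → Bool) (hbip : ∀ i j, G.Adj i j → part i ≠ part j)
    (a b : Fin n) (hab : a ≠ b) (hpart : part a = part b)
    (τ : ℝ) (α β : ℂ) (hβ : β ≠ 0)
    (hnorm : ‖α‖ ^ 2 + ‖β‖ ^ 2 = 1)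
    (hrev : (qwalk (G.adjMatrix ℝ) τ) *ᵥ eC a = α • eC a + β • eC b) :
    ((qwalk (G.adjMatrix ℝ) (2 * τ)) *ᵥ eC a = eC a ∧
     (qwalk (G.adjMatrix ℝ) (2 * τ)) *ᵥ eC b = eC b) ∨
    ((qwalk (G.adjMatrix ℝ) (2 * τ)) *ᵥ eC a = -(eC a) ∧
     (qwalk (G.adjMatrix ℝ) (2 * τ)) *ᵥ eC b = -(eC b)) := by
  set A := G.adjMatrix ℝ with hA
  set B := A.map (fun x => (x : ℂ)) with hBdef
  set U := qwalk A τ with hUdef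
  -- U(2τ) = U * U
  have h2τ : qwalk A (2 * τ) = U * U := by
    rw [hUdef, qwalk, qwalk]
    have hsc : (-(Complex.I * ((2 * τ : ℝ) : ℂ))) • B
        = (-(Complex.I * (τ : ℂ))) • B + (-(Complex.I * (τ : ℂ))) • B := by
      rw [← add_smul]; congr 1; push_cast; ring
    rw [hsc, Matrix.exp_add_of_commute _ _ (Commute.refl _)]
  -- B is Hermitian and symmetric
  have hBT : Bᵀ = B := by
    ext i j
    simp [hBdef, hA, Matrix.transpose_apply, Matrix.map_apply, SimpleGraph.adjMatrix_apply,
      SimpleGraph.adj_comm]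
  have hBH : Bᴴ = B := by
    ext i j
    simp [hBdef, Matrix.conjTranspose_apply, Matrix.map_apply, Matrix.transpose_apply, hA,
      SimpleGraph.adjMatrix_apply, SimpleGraph.adj_comm]
  -- U symmetric
  have hUT : Uᵀ = U := by
    rw [hUdef, qwalk, ← Matrix.exp_transpose, Matrix.transpose_smul, hBT]
  have hUsym : ∀ i j, U j i = U i j := by
    intro i j
    have h := congrFun (congrFun hUT j) i
    rw [Matrix.transpose_apply] at h
    exact h.symm
  -- Uᴴ is the inverse of U
  have hUH : Uᴴ = NormedSpace.exp (-((-(Complex.I * (τ : ℂ))) • B)) := by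
    rw [hUdef, qwalk, ← Matrix.exp_conjTranspose, Matrix.conjTranspose_smul, hBH]
    congr 1
    simp [Complex.star_def]
  have hinv : Uᴴ * U = 1 := by
    rw [hUH, hUdef, qwalk, ← Matrix.exp_add_of_commute _ _ (Commute.neg_left (Commute.refl ((-(Complex.I * (τ : ℂ))) • B))),
      neg_add_cancel, NormedSpace.exp_zero]
  -- column a of U
  have hUa : ∀ i, U i a = α * eC a i + β * eC b i := by
    intro i
    have h := congrFun hrev i
    simpa [eC, Matrix.mulVec_single, Pi.add_apply, Pi.smul_apply, smul_eq_mul] using h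
  have hαv : U a a = α := by simp [hUa a, eC, Pi.single_apply, hab.symm]
  have hβv : U b a = β := by simp [hUa b, eC, Pi.single_apply, hab]
  -- reality of α, β and the eC entries
  have hαr : (starRingEnd ℂ) α = α := by
    rw [← hαv]; exact qwalk_real' G part hbip τ a a rfl
  have hβr : (starRingEnd ℂ) β = β := by
    rw [← hβv]; exact qwalk_real' G part hbip τ b a hpart.symm
  have hconjeC : ∀ (c : Fin n) (i : Fin n), (starRingEnd ℂ) (eC c i) = eC c i := by
    intro c i
    simp only [eC, Pi.single_apply]
    split <;> simp
  -- α² + β² = 1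
  have haim : α.im = 0 := Complex.conj_eq_iff_im.mp hαr
  have hbim : β.im = 0 := Complex.conj_eq_iff_im.mp hβr
  have hsq : α ^ 2 + β ^ 2 = 1 := by
    have h1 : ‖α‖ ^ 2 = α.re ^ 2 := by
      rw [Complex.sq_norm, Complex.normSq_apply, haim]; ring
    have h2 : ‖β‖ ^ 2 = β.re ^ 2 := by
      rw [Complex.sq_norm, Complex.normSq_apply, hbim]; ring
    rw [h1, h2] at hnorm
    apply Complex.ext <;>
      simp [pow_two, Complex.add_re, Complex.add_im, Complex.mul_re, Complex.mul_im, haim, hbim]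
    linarith [hnorm]
  -- Uᴴ column a
  have hWa : Uᴴ *ᵥ eC a = α • eC a + β • eC b := by
    funext i
    have : (Uᴴ *ᵥ eC a) i = (starRingEnd ℂ) (U i a) := by
      simp [eC, Matrix.mulVec_single, Matrix.conjTranspose_apply, hUsym a i]
    rw [this, hUa i]
    simp only [map_add, _root_.map_mul, hαr, hβr, hconjeC, Pi.add_apply, Pi.smul_apply,
      smul_eq_mul]
  -- Uᴴ column b
  have hWb : Uᴴ *ᵥ eC b = β • eC a - α • eC b := by
    have h1 : α • (Uᴴ *ᵥ eC a) + β • (Uᴴ *ᵥ eC b) = eC a := by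
      calc α • (Uᴴ *ᵥ eC a) + β • (Uᴴ *ᵥ eC b)
          = Uᴴ *ᵥ (α • eC a + β • eC b) := by
            rw [Matrix.mulVec_add, Matrix.mulVec_smul, Matrix.mulVec_smul]
        _ = Uᴴ *ᵥ (U *ᵥ eC a) := by rw [hrev]
        _ = (Uᴴ * U) *ᵥ eC a := by rw [Matrix.mulVec_mulVec]
        _ = eC a := by rw [hinv, Matrix.one_mulVec]
    rw [hWa] at h1
    have key : β • (Uᴴ *ᵥ eC b) = β • (β • eC a - α • eC b) := by
      have h1' : β • (Uᴴ *ᵥ eC b) = eC a - α • (α • eC a + β • eC b) :=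
        eq_sub_of_add_eq' h1
      rw [h1']
      funext i
      simp only [Pi.add_apply, Pi.sub_apply, Pi.smul_apply, smul_eq_mul]
      linear_combination (-(eC a i)) * hsq
    exact smul_right_injective (Fin n → ℂ) hβ key
  -- U column b
  have hUb : U *ᵥ eC b = β • eC a - α • eC b := by
    funext i
    have h1 : (U *ᵥ eC b) i = U i b := by simp [eC, Matrix.mulVec_single]
    have h2 : (Uᴴ *ᵥ eC b) i = Uᴴ i b := by simp [eC, Matrix.mulVec_single]
    have h3 : Uᴴ i b = (starRingEnd ℂ) (U i b) := by
      simp [Matrix.conjTranspose_apply, hUsym i b]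
    have h4 : (starRingEnd ℂ) (U i b) = (β • eC a - α • eC b) i := by
      rw [← h3, ← h2, hWb]
    have h5 : (starRingEnd ℂ) ((β • eC a - α • eC b : Fin n → ℂ) i)
        = (β • eC a - α • eC b : Fin n → ℂ) i := by
      simp only [Pi.sub_apply, Pi.smul_apply, smul_eq_mul, map_sub, _root_.map_mul, hαr, hβr,
        hconjeC]
    rw [h1, ← Complex.conj_conj (U i b), h4, h5]
  refine Or.inl ⟨?_, ?_⟩
  · rw [h2τ, ← Matrix.mulVec_mulVec, hrev, Matrix.mulVec_add, Matrix.mulVec_smul,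
      Matrix.mulVec_smul, hrev, hUb]
    funext i
    simp only [Pi.add_apply, Pi.sub_apply, Pi.smul_apply, smul_eq_mul]
    linear_combination (eC a i) * hsq
  · rw [h2τ, ← Matrix.mulVec_mulVec, hUb, Matrix.mulVec_sub, Matrix.mulVec_smul,
      Matrix.mulVec_smul, hrev, hUb]
    funext i
    simp only [Pi.add_apply, Pi.sub_apply, Pi.smul_apply, smul_eq_mul]
    linear_combination (eC b i) * hsq
end

section
/- Suppose (α,β)-revival occurs at time τ between vertices a and b in different parts of the bipartition of a connected bipartite graph. Then α is real, β is purely imaginary, and a and b are strongly cospectral. -/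
open Matrix Complex BigOperators

lemma proj_exp {n : ℕ} (P M : Matrix (Fin n) (Fin n) ℂ) (c : ℂ)
    (hPM : P * M = c • P) :
    P * NormedSpace.exp M = Complex.exp c • P := by
  letI : SeminormedRing (Matrix (Fin n) (Fin n) ℂ) := Matrix.linftyOpSemiNormedRing
  letI : NormedRing (Matrix (Fin n) (Fin n) ℂ) := Matrix.linftyOpNormedRing
  letI : NormedAlgebra ℂ (Matrix (Fin n) (Fin n) ℂ) := Matrix.linftyOpNormedAlgebra
  have hpow : ∀ k : ℕ, P * M ^ k = c ^ k • P := by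
    intro k; induction k with
    | zero => simp
    | succ k ih =>
      rw [pow_succ, ← mul_assoc, ih, smul_mul_assoc, hPM, smul_smul, ← pow_succ]
  have h1 : HasSum (fun k : ℕ => ((k.factorial : ℂ))⁻¹ • M ^ k) (NormedSpace.exp M) := by
    rw [NormedSpace.exp_eq_tsum ℂ]
    exact (NormedSpace.expSeries_summable' M).hasSum
  have h3 : HasSum (fun k : ℕ => (((k.factorial : ℂ))⁻¹ * c ^ k) • P) (P * NormedSpace.exp M) := by
    have h2 := h1.mul_left P
    have e : (fun k : ℕ => (((k.factorial : ℂ))⁻¹ * c ^ k) • P)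
        = (fun k : ℕ => P * ((k.factorial : ℂ))⁻¹ • M ^ k) := by
      funext k
      rw [mul_smul_comm, hpow, smul_smul]
    rw [e]
    exact h2
  have h4 : HasSum (fun k : ℕ => ((k.factorial : ℂ))⁻¹ • c ^ k) (Complex.exp c) := by
    rw [Complex.exp_eq_exp_ℂ, NormedSpace.exp_eq_tsum ℂ]
    exact (NormedSpace.expSeries_summable' c).hasSum
  exact h3.unique (by simpa [smul_eq_mul] using h4.smul_const P)

/-- Fractional revival between two vertices in different parts of the bipartition of a
connected bipartite graph: α is real, β is purely imaginary, and a, b are strongly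
cospectral. -/
theorem stmt15 {n m : ℕ} (G : SimpleGraph (Fin n)) [DecidableRel G.Adj]
    (hconn : G.Connected)
    (part : Fin n → Bool) (hbip : ∀ i j, G.Adj i j → part i ≠ part j)
    (θ : Fin m → ℝ) (E : Fin m → Matrix (Fin n) (Fin n) ℝ)
    (hdecomp : G.adjMatrix ℝ = ∑ r, θ r • E r)
    (hsum : ∑ r, E r = 1)
    (hsymm : ∀ r, (E r).IsSymm)
    (horth : ∀ r s, E r * E s = if r = s then E r else 0)
    (a b : Fin n) (hab : a ≠ b) (hpart : part a ≠ part b)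
    (τ : ℝ) (α β : ℂ) (hβ : β ≠ 0)
    (hnorm : ‖α‖ ^ 2 + ‖β‖ ^ 2 = 1)
    (hrev : (qwalk (G.adjMatrix ℝ) τ) *ᵥ eC a = α • eC a + β • eC b) :
    α.im = 0 ∧ β.re = 0 ∧
    ∀ r, E r *ᵥ eR a = E r *ᵥ eR b ∨ E r *ᵥ eR a = -(E r *ᵥ eR b) := by
  set Ac : Matrix (Fin n) (Fin n) ℂ := (G.adjMatrix ℝ).map (fun x => (x : ℂ)) with hAc
  set M : Matrix (Fin n) (Fin n) ℂ := (-(Complex.I * (τ:ℂ))) • Ac with hMdef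
  set U : Matrix (Fin n) (Fin n) ℂ := NormedSpace.exp M with hUdef
  have hqw : qwalk (G.adjMatrix ℝ) τ = U := rfl
  rw [hqw] at hrev
  -- symmetry of Ac
  have hAcT : Acᵀ = Ac := by
    ext i j
    simp [hAc, Matrix.transpose_apply, Matrix.map_apply, SimpleGraph.adjMatrix_apply,
      G.adj_comm i j]
  have hAcH : Acᴴ = Ac := by
    ext i j
    simp [hAc, Matrix.conjTranspose_apply, Matrix.map_apply, SimpleGraph.adjMatrix_apply,
      G.adj_comm i j, apply_ite (starRingEnd ℂ)]
  have hMT : Mᵀ = M := by rw [hMdef, Matrix.transpose_smul, hAcT]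
  have hMH : Mᴴ = -M := by
    rw [hMdef, Matrix.conjTranspose_smul, hAcH, ← neg_smul]
    congr 1
    simp [Complex.ext_iff]
  have hUT : Uᵀ = U := by rw [hUdef, ← Matrix.exp_transpose, hMT]
  have hUH : Uᴴ = NormedSpace.exp (-M) := by rw [hUdef, ← Matrix.exp_conjTranspose, hMH]
  have hUnit : Uᴴ * U = 1 := by
    rw [hUH, hUdef, ← Matrix.exp_add_of_commute (-M) M ((Commute.refl M).neg_left), neg_add_cancel,
      NormedSpace.exp_zero]
  -- the sign matrix
  set D : Matrix (Fin n) (Fin n) ℂ :=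
    Matrix.diagonal (fun x => if part x then 1 else -1) with hDdef
  have hD2 : D * D = 1 := by
    rw [hDdef, Matrix.diagonal_mul_diagonal]
    ext i j
    by_cases h : part i <;> simp [h, Matrix.diagonal_apply, Matrix.one_apply]
  have hDinv : D⁻¹ = D := Matrix.inv_eq_right_inv hD2
  have hDAcD : D * Ac * D = -Ac := by
    ext i j
    rw [hDdef]
    simp only [Matrix.diagonal_mul, Matrix.mul_diagonal, Matrix.neg_apply]
    by_cases h : G.Adj i j
    · have := hbip i j h
      rcases Bool.eq_false_or_eq_true (part i) with h1 | h1 <;>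
        rcases Bool.eq_false_or_eq_true (part j) with h2 | h2 <;>
        simp_all [hAc, Matrix.map_apply]
    · simp [hAc, Matrix.map_apply, h]
  have hDMD : D * M * D = -M := by
    rw [hMdef, Matrix.mul_smul, Matrix.smul_mul, hDAcD]
    module
  have hDUD : D * U * D = Uᴴ := by
    have hDu : IsUnit D := by
      have hdet : D.det * D.det = 1 := by rw [← Matrix.det_mul, hD2, Matrix.det_one]
      exact (Matrix.isUnit_iff_isUnit_det D).2 (IsUnit.of_mul_eq_one _ hdet)
    have := Matrix.exp_conj D M hDu
    rw [hDinv, hDMD] at this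
    rw [hUdef, ← this, hUH]
  -- column a entries
  have hcol : ∀ x, U x a = α * (eC a x) + β * (eC b x) := by
    intro x
    have h := congrFun hrev x
    simpa [Matrix.mulVec, dotProduct, eC, Pi.single_apply] using h
  have hUaa : U a a = α := by simpa [eC, Pi.single_apply, hab] using hcol a
  have hUba : U b a = β := by simpa [eC, Pi.single_apply, hab.symm] using hcol b
  have hUab : U a b = β := by
    have := congrFun (congrFun hUT a) b
    rw [Matrix.transpose_apply] at this
    rw [← this, hUba]
  -- sign values
  have hd2 : ∀ x : Fin n, (if part x then (1:ℂ) else -1) * (if part x then 1 else -1) = 1 := by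
    intro x; by_cases h : part x <;> simp [h]
  have hdab : (if part a then (1:ℂ) else -1) * (if part b then 1 else -1) = -1 := by
    rcases Bool.eq_false_or_eq_true (part a) with h1 | h1 <;>
      rcases Bool.eq_false_or_eq_true (part b) with h2 | h2 <;> simp_all
  -- α real
  have hαim : α.im = 0 := by
    have h := congrFun (congrFun hDUD a) a
    rw [hDdef] at h
    simp only [Matrix.diagonal_mul, Matrix.mul_diagonal, Matrix.conjTranspose_apply] at h
    rw [hUaa] at h
    have h' : α = star α := by linear_combination h - α * hd2 a
    have h2 := congrArg Complex.im h'
    simp [Complex.star_def, Complex.conj_im] at h2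
    linarith
  -- β imaginary
  have hβre : β.re = 0 := by
    have h := congrFun (congrFun hDUD b) a
    rw [hDdef] at h
    simp only [Matrix.diagonal_mul, Matrix.mul_diagonal, Matrix.conjTranspose_apply] at h
    rw [hUba, hUab] at h
    have h' : -β = star β := by linear_combination h - β * hdab
    have h2 := congrArg Complex.re h'
    simp [Complex.star_def, Complex.conj_re] at h2
    linarith
  have hstarα : (starRingEnd ℂ) α = α := Complex.conj_eq_iff_im.mpr hαim
  have hstarβ : (starRingEnd ℂ) β = -β := by
    apply Complex.ext <;> simp [hβre]
  -- column orthogonality relations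
  have hz : ∀ z, Uᴴ a z = (starRingEnd ℂ) α * (eC a z) + (starRingEnd ℂ) β * (eC b z) := by
    intro z
    rw [Matrix.conjTranspose_apply, hcol z]
    by_cases hza : z = a <;> by_cases hzb : z = b <;>
      simp [eC, Pi.single_apply, hza, hzb, hab, Complex.star_def]
  have key : ∀ y, (starRingEnd ℂ) α * U a y + (starRingEnd ℂ) β * U b y
      = if a = y then 1 else 0 := by
    intro y
    have h := congrFun (congrFun hUnit a) y
    rw [Matrix.mul_apply, Matrix.one_apply] at h
    rw [← h]
    rw [Finset.sum_congr rfl (fun z _ => by rw [hz z])]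
    simp [eC, Pi.single_apply, add_mul, ite_mul, Finset.sum_add_distrib,
      Finset.sum_ite_eq', mul_assoc]
  have hUbb : U b b = α := by
    have h := key b
    rw [if_neg hab, hUab, hstarα, hstarβ] at h
    have h2 : β * U b b = β * α := by linear_combination -h
    exact mul_left_cancel₀ hβ h2
  -- column b is supported on {a, b}
  have hUzb : ∀ z, z ≠ a → z ≠ b → U z b = 0 := by
    have hbb := congrFun (congrFun hUnit b) b
    rw [Matrix.mul_apply, Matrix.one_apply_eq] at hbb
    have hsum1 : ∑ z, (Complex.normSq (U z b) : ℂ) = 1 := by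
      rw [← hbb]
      refine Finset.sum_congr rfl fun z _ => ?_
      rw [Matrix.conjTranspose_apply, Complex.star_def, mul_comm, Complex.mul_conj]
    have hre : ∑ z, Complex.normSq (U z b) = 1 := by
      have := congrArg Complex.re hsum1
      simpa using this
    have hmemb : b ∈ Finset.univ.erase a := Finset.mem_erase.mpr ⟨hab.symm, Finset.mem_univ b⟩
    have hrest : ∑ z ∈ (Finset.univ.erase a).erase b, Complex.normSq (U z b) = 0 := by
      rw [Finset.sum_erase_eq_sub hmemb, Finset.sum_erase_eq_sub (Finset.mem_univ a)]
      rw [hre, hUab, hUbb, ← Complex.sq_norm, ← Complex.sq_norm]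
      linarith [hnorm]
    intro z hza hzb
    have hmem : z ∈ (Finset.univ.erase a).erase b :=
      Finset.mem_erase.mpr ⟨hzb, Finset.mem_erase.mpr ⟨hza, Finset.mem_univ z⟩⟩
    have := (Finset.sum_eq_zero_iff_of_nonneg
      (fun i _ => Complex.normSq_nonneg (U i b))).mp hrest z hmem
    exact Complex.normSq_eq_zero.mp this
  have hcolb : ∀ x, U x b = β * (eC a x) + α * (eC b x) := by
    intro x
    by_cases hxa : x = a
    · subst hxa; simp [eC, Pi.single_apply, hab, hab.symm, hUab]
    · by_cases hxb : x = b
      · subst hxb; simp [eC, Pi.single_apply, hab.symm, hUbb]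
      · simp [eC, Pi.single_apply, hxa, hxb, hUzb x hxa hxb]
  have hrevb : U *ᵥ eC b = β • eC a + α • eC b := by
    funext x
    have hx : (U *ᵥ eC b) x = U x b := by
      simp [Matrix.mulVec, dotProduct, eC, Pi.single_apply]
    rw [hx, hcolb x]
    simp
  refine ⟨hαim, hβre, ?_⟩
  -- strong cospectrality
  intro r
  set c : ℂ := -(Complex.I * (τ:ℂ)) * (θ r : ℂ) with hc
  have hEsR : E r * G.adjMatrix ℝ = θ r • E r := by
    rw [hdecomp, Finset.mul_sum]
    rw [Finset.sum_congr rfl (fun s _ => by rw [mul_smul_comm, horth r s])]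
    simp only [smul_ite, smul_zero]
    rw [Finset.sum_ite_eq]
    simp
  set P : Matrix (Fin n) (Fin n) ℂ := (E r).map (fun x => (x : ℂ)) with hP
  have hPA : P * Ac = (θ r : ℂ) • P := by
    ext i j
    rw [hP, hAc, Matrix.mul_apply, Matrix.smul_apply]
    have hent : (E r * G.adjMatrix ℝ) i j = θ r * E r i j := by
      rw [hEsR]; simp
    rw [Matrix.mul_apply] at hent
    calc (∑ y, ((E r).map (fun x => (x:ℂ))) i y *
          ((G.adjMatrix ℝ).map (fun x => (x:ℂ))) y j)
        = ((∑ y, E r i y * G.adjMatrix ℝ y j : ℝ) : ℂ) := by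
          push_cast [Matrix.map_apply]; rfl
      _ = ((θ r * E r i j : ℝ) : ℂ) := by rw [hent]
      _ = (θ r : ℂ) • ((E r).map (fun x => (x:ℂ))) i j := by
          push_cast [Matrix.map_apply]; simp
  have hPM : P * M = c • P := by
    rw [hMdef, Matrix.mul_smul, hPA, smul_smul, hc]
  have hproj : P * U = Complex.exp c • P := by
    rw [hUdef]
    exact proj_exp P M c hPM
  set u : Fin n → ℂ := P *ᵥ eC a with hu
  set v : Fin n → ℂ := P *ᵥ eC b with hv
  set lam : ℂ := Complex.exp c with hlam
  have h1 : lam • u = α • u + β • v := by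
    have h := congrArg (fun w => P *ᵥ w) hrev
    simpa only [Matrix.mulVec_mulVec, hproj, Matrix.smul_mulVec, Matrix.mulVec_add,
      Matrix.mulVec_smul] using h
  have h2 : lam • v = β • u + α • v := by
    have h := congrArg (fun w => P *ᵥ w) hrevb
    simpa only [Matrix.mulVec_mulVec, hproj, Matrix.smul_mulVec, Matrix.mulVec_add,
      Matrix.mulVec_smul] using h
  have e1 : (lam - α) • u = β • v := by
    rw [sub_smul, h1]; module
  have e2 : (lam - α) • v = β • u := by
    rw [sub_smul, h2]; module
  -- complex-valued conclusion
  have hcomplex : u = v ∨ u = -v := by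
    by_cases hu0 : u = 0
    · left
      have hv0 : v = 0 := by
        have h := e1
        rw [hu0, smul_zero] at h
        exact (smul_eq_zero.mp h.symm).resolve_left hβ
      rw [hu0, hv0]
    · obtain ⟨x, hx⟩ := Function.ne_iff.mp hu0
      simp only [Pi.zero_apply] at hx
      have h3 : ((lam - α)^2) • u = (β^2) • u := by
        calc ((lam - α)^2) • u = (lam - α) • ((lam - α) • u) := by rw [smul_smul, sq]
          _ = (lam - α) • (β • v) := by rw [e1]
          _ = β • ((lam - α) • v) := by rw [smul_comm]
          _ = β • (β • u) := by rw [e2]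
          _ = (β^2) • u := by rw [smul_smul, sq]
      have hsq : (lam - α)^2 = β^2 := by
        have h4 := congrFun h3 x
        simp only [Pi.smul_apply, smul_eq_mul] at h4
        exact mul_right_cancel₀ hx h4
      have hfac : (lam - α - β) * (lam - α + β) = 0 := by linear_combination hsq
      rcases mul_eq_zero.mp hfac with h | h
      · left
        have hba : lam - α = β := by linear_combination h
        rw [hba] at e1
        exact smul_right_injective (Fin n → ℂ) hβ e1
      · right
        have hba : lam - α = -β := by linear_combination h
        rw [hba, neg_smul] at e1
        have e1' : β • (-u) = β • v := by rw [smul_neg]; exact e1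
        have hneg := smul_right_injective (Fin n → ℂ) hβ e1'
        rw [← hneg, neg_neg]
  -- transfer to ℝ
  have hcast : ∀ (w : Fin n → ℝ) (x : Fin n),
      (P *ᵥ fun y => ((w y : ℝ) : ℂ)) x = (((E r *ᵥ w) x : ℝ) : ℂ) := by
    intro w x
    simp only [hP, Matrix.mulVec, dotProduct, Matrix.map_apply]
    push_cast
    rfl
  have heCa : eC a = fun y => ((eR a y : ℝ) : ℂ) := by
    funext y
    simp [eC, eR, Pi.single_apply, apply_ite (fun t : ℝ => (t : ℂ))]
  have heCb : eC b = fun y => ((eR b y : ℝ) : ℂ) := by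
    funext y
    simp [eC, eR, Pi.single_apply, apply_ite (fun t : ℝ => (t : ℂ))]
  have hu' : ∀ x, u x = (((E r *ᵥ eR a) x : ℝ) : ℂ) := by
    intro x; rw [hu, heCa]; exact hcast (eR a) x
  have hv' : ∀ x, v x = (((E r *ᵥ eR b) x : ℝ) : ℂ) := by
    intro x; rw [hv, heCb]; exact hcast (eR b) x
  rcases hcomplex with h | h
  · left
    funext x
    have hx := congrFun h x
    rw [hu' x, hv' x] at hx
    exact_mod_cast hx
  · right
    funext x
    have hx := congrFun h x
    rw [hu' x, Pi.neg_apply, hv' x] at hx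
    rw [Pi.neg_apply]
    exact_mod_cast hx
end
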